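/- arXiv:1602.03499 — 3 statements merged into one kernel-verified Lean document; each statement's English description precedes it below -/
import Mathlib

section
/- Let d ≥ 3 and let A and B be finite subsets of ℤ^d. Then cap(A ∪ B) ≥ cap(A) + cap(B) − 2 ∑_{x ∈ A} ∑_{y ∈ B} G(x,y). -/
open MeasureTheory ProbabilityTheory Filter
open scoped ENNReal

noncomputable section

/-- The uniform probability measure on `[0,1)`: the driving randomness for the walk. -/
def P0 : Measure ℝ := volume.restrict (Set.Ico (0:ℝ) 1)

/-- `i`-th digit of `u` in base `b`.  For `u ∈ [0,1)` these digits are i.i.d. uniform on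
`{0, …, b-1}` under `P0`. -/
def digit (b i : ℕ) (u : ℝ) : ℕ := (⌊u * (b : ℝ) ^ (i + 1)⌋).toNat % b

/-- Enumeration of the `2d` unit vectors of `ℤ^d`: `stepVec d j = e_j` for `j < d` and
`stepVec d j = -e_{j-d}` for `d ≤ j < 2d`. -/
def stepVec (d j : ℕ) : Fin d → ℤ :=
  fun i => if j < d then (if (i : ℕ) = j then 1 else 0)
    else (if (i : ℕ) = j - d then -1 else 0)

/-- Simple random walk on `ℤ^d` started at `x`, at time `n`, driven by the base-`2d`
digits of `u` (which are i.i.d. uniform on the `2d` unit steps under `P0`). -/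
def walk (d : ℕ) (x : Fin d → ℤ) (u : ℝ) (n : ℕ) : Fin d → ℤ :=
  x + ∑ i ∈ Finset.range n, stepVec d (digit (2 * d) i u)

/-- Probability that the walk started at `x` never returns to `A` after time `0`,
i.e. `P_x(T_A^+ = ∞)`. -/
def escProb (d : ℕ) (A : Set (Fin d → ℤ)) (x : Fin d → ℤ) : ℝ :=
  (P0 {u | ∀ t, 1 ≤ t → walk d x u t ∉ A}).toReal

/-- Capacity of a finite subset of `ℤ^d`. -/
def capa (d : ℕ) (A : Finset (Fin d → ℤ)) : ℝ :=
  ∑ x ∈ A, escProb d (↑A) x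

/-- Green kernel of the simple random walk on `ℤ^d`:
`G(x,y) = E_x[∑_{t≥0} 1(S_t = y)] = ∑_{t≥0} P_x(S_t = y)`. -/
def green (d : ℕ) (x y : Fin d → ℤ) : ℝ :=
  (∑' t : ℕ, P0 {u | walk d x u t = y}).toReal

/-- Range `R[m,n] = {S_m, …, S_n}` of the walk started at `x`, driven by `u`. -/
def walkRange (d : ℕ) (x : Fin d → ℤ) (u : ℝ) (m n : ℕ) : Finset (Fin d → ℤ) :=
  (Finset.Icc m n).image (walk d x u)

namespace CapaAux

open Finset

/-- classical indicator into `ℝ≥0∞`. -/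
def I (P : Prop) : ℝ≥0∞ := by classical exact if P then 1 else 0

lemma I_congr {P Q : Prop} (h : P ↔ Q) : I P = I Q := by
  by_cases hP : P
  · simp [I, hP, h.mp hP]
  · have hQ : ¬Q := fun hq => hP (h.mpr hq)
    simp [I, hP, hQ]

lemma I_of (P : Prop) (h : P) : I P = 1 := by simp [I, h]

lemma I_and (P Q : Prop) : I (P ∧ Q) = I P * I Q := by
  by_cases h : P <;> by_cases h' : Q <;> simp [I, h, h']

/-- base-b sums of digits bound -/
lemma sum_lt_pow {b : ℕ} (hb : 1 ≤ b) {T : ℕ} (c : ℕ → ℕ) (hc : ∀ e < T, c e < b) :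
    ∑ e ∈ range T, c e * b ^ e < b ^ T := by
  induction T with
  | zero => simp
  | succ T ih =>
    have h1 : ∑ e ∈ range T, c e * b ^ e < b ^ T :=
      ih (fun e he => hc e (he.trans (Nat.lt_succ_self T)))
    have h2 : c T ≤ b - 1 := Nat.le_sub_one_of_lt (hc T (Nat.lt_succ_self T))
    have hb' : b - 1 + 1 = b := Nat.succ_pred_eq_of_pos hb
    calc ∑ e ∈ range (T+1), c e * b ^ e
        = (∑ e ∈ range T, c e * b ^ e) + c T * b ^ T := Finset.sum_range_succ _ _
      _ < b ^ T + (b-1) * b ^ T :=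
          Nat.add_lt_add_of_lt_of_le h1 (Nat.mul_le_mul_right _ h2)
      _ = (b - 1 + 1) * b ^ T := by ring
      _ = b ^ (T+1) := by rw [hb']; ring

lemma sum_range_split {M : Type*} [AddCommMonoid M] (f : ℕ → M) (m n : ℕ) :
    ∑ i ∈ range (m + n), f i = (∑ i ∈ range m, f i) + ∑ i ∈ range n, f (m + i) := by
  induction n with
  | zero => simp
  | succ n ih => rw [← Nat.add_assoc, Finset.sum_range_succ, ih, Finset.sum_range_succ, add_assoc]

lemma extract {b : ℕ} (hb : 1 ≤ b) {T : ℕ} (c : ℕ → ℕ) (hc : ∀ e < T, c e < b)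
    {e : ℕ} (he : e < T) :
    (∑ j ∈ range T, c j * b ^ j) / b ^ e % b = c e := by
  obtain ⟨m, rfl⟩ : ∃ m, T = e + (m + 1) := ⟨T - e - 1, by omega⟩
  rw [sum_range_split]
  have hA : ∑ j ∈ range e, c j * b ^ j < b ^ e :=
    sum_lt_pow hb c (fun j hj => hc j (by omega))
  have hsplit : ∑ i ∈ range (m+1), c (e + i) * b ^ (e + i)
      = b ^ e * ∑ i ∈ range (m+1), c (e + i) * b ^ i := by
    rw [Finset.mul_sum]
    refine Finset.sum_congr rfl (fun i _ => ?_)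
    rw [pow_add]; ring
  rw [hsplit, Nat.add_mul_div_left _ _ (Nat.pow_pos hb : 0 < b ^ e),
    Nat.div_eq_of_lt hA, Nat.zero_add]
  rw [Finset.sum_range_succ']
  have : ∑ i ∈ range m, c (e + (i+1)) * b ^ (i+1)
      = b * ∑ i ∈ range m, c (e + (i+1)) * b ^ i := by
    rw [Finset.mul_sum]
    refine Finset.sum_congr rfl (fun i _ => ?_)
    rw [pow_succ]; ring
  rw [this]
  simp only [pow_zero, mul_one, Nat.add_zero]
  rw [add_comm, Nat.add_mul_mod_self_left]
  exact Nat.mod_eq_of_lt (hc e he)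

lemma expand {b : ℕ} (hb : 1 ≤ b) : ∀ (T m : ℕ), m < b ^ T →
    ∑ e ∈ range T, (m / b ^ e % b) * b ^ e = m := by
  intro T
  induction T with
  | zero =>
    intro m hm
    have : m = 0 := Nat.lt_one_iff.mp (by simpa using hm)
    subst this
    simp
  | succ T ih =>
    intro m hm
    rw [Finset.sum_range_succ']
    have hdiv : m / b < b ^ T := by
      rw [Nat.div_lt_iff_lt_mul hb]
      calc m < b ^ (T+1) := hm
        _ = b ^ T * b := by ring
    have key : ∑ e ∈ range T, (m / b ^ (e+1) % b) * b ^ (e+1)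
        = b * ∑ e ∈ range T, ((m / b) / b ^ e % b) * b ^ e := by
      rw [Finset.mul_sum]
      refine Finset.sum_congr rfl (fun e _ => ?_)
      rw [Nat.div_div_eq_div_mul, ← pow_succ']
      ring
    rw [key, ih _ hdiv]
    simp only [pow_zero, mul_one, Nat.div_one]
    exact Nat.div_add_mod m b


lemma digit_lt {b : ℕ} (hb : 1 ≤ b) (i : ℕ) (u : ℝ) : digit b i u < b :=
  Nat.mod_lt _ hb

lemma digit_eq_extract {b : ℕ} (hb : 1 ≤ b) {u : ℝ} (hu : 0 ≤ u) {i T : ℕ} (hiT : i < T) :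
    digit b i u = ⌊u * (b:ℝ) ^ T⌋₊ / b ^ (T - 1 - i) % b := by
  have hb0 : (0:ℝ) < b := by exact_mod_cast hb
  have hexp : (i + 1) + (T - 1 - i) = T := by omega
  have hpow : u * (b:ℝ) ^ (i+1) = (u * (b:ℝ) ^ T) / ((b ^ (T-1-i) : ℕ) : ℝ) := by
    push_cast
    rw [eq_div_iff (by positivity)]
    rw [mul_assoc, ← pow_add, hexp]
  rw [digit, Int.floor_toNat, hpow, Nat.floor_div_natCast]

/-- The cylinder set of a digit pattern is an explicit interval. -/
lemma cylinder_eq {b : ℕ} (hb : 1 ≤ b) {T : ℕ} (a : ℕ → ℕ) (ha : ∀ i < T, a i < b) :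
    {u : ℝ | ∀ i < T, digit b i u = a i} ∩ Set.Ico (0:ℝ) 1
      = Set.Ico (((∑ i ∈ range T, a i * b ^ (T-1-i) : ℕ) : ℝ) / (b:ℝ)^T)
               ((((∑ i ∈ range T, a i * b ^ (T-1-i) : ℕ) : ℝ) + 1) / (b:ℝ)^T) := by
  have hb0 : (0:ℝ) < b := by exact_mod_cast hb
  have hbT : (0:ℝ) < (b:ℝ) ^ T := by positivity
  set k : ℕ := ∑ i ∈ range T, a i * b ^ (T-1-i) with hkdef
  have hk' : k = ∑ e ∈ range T, a (T-1-e) * b ^ e := by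
    rw [hkdef, ← Finset.sum_range_reflect]
    refine Finset.sum_congr rfl (fun j hj => ?_)
    rw [Finset.mem_range] at hj
    rw [show T - 1 - (T - 1 - j) = j by omega]
  have hklt : k < b ^ T := by
    rw [hk']
    exact sum_lt_pow hb _ (fun e he => ha _ (by omega))
  ext u
  simp only [Set.mem_inter_iff, Set.mem_setOf_eq, Set.mem_Ico]
  constructor
  · rintro ⟨hdig, hu0, hu1⟩
    have hmlt : ⌊u * (b:ℝ)^T⌋₊ < b ^ T := by
      apply Nat.floor_lt (by positivity) |>.mpr
      calc u * (b:ℝ)^T < 1 * (b:ℝ)^T := by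
            exact mul_lt_mul_of_pos_right hu1 hbT
        _ = (b:ℝ)^T := one_mul _
        _ = ((b ^ T : ℕ) : ℝ) := by push_cast; ring
    have hm : ⌊u * (b:ℝ)^T⌋₊ = k := by
      set m := ⌊u * (b:ℝ)^T⌋₊ with hmdef
      have hext : ∀ e < T, m / b ^ e % b = a (T-1-e) := by
        intro e he
        have hi : T - 1 - e < T := by omega
        have := hdig (T-1-e) hi
        rw [digit_eq_extract hb hu0 hi, show T - 1 - (T-1-e) = e by omega] at this
        exact this
      calc m = ∑ e ∈ range T, (m / b ^ e % b) * b ^ e := (expand hb T m hmlt).symm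
        _ = ∑ e ∈ range T, a (T-1-e) * b ^ e :=
            Finset.sum_congr rfl (fun e he => by rw [hext e (Finset.mem_range.mp he)])
        _ = k := hk'.symm
    constructor
    · rw [div_le_iff₀ hbT]
      calc (k:ℝ) = (⌊u * (b:ℝ)^T⌋₊ : ℝ) := by rw [hm]
        _ ≤ u * (b:ℝ)^T := Nat.floor_le (by positivity)
    · rw [lt_div_iff₀ hbT]
      calc u * (b:ℝ)^T < ⌊u * (b:ℝ)^T⌋₊ + 1 := Nat.lt_floor_add_one _
        _ = (k:ℝ) + 1 := by rw [hm]
  · rintro ⟨h1, h2⟩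
    have hu0 : 0 ≤ u := le_trans (by positivity) h1
    have hu1 : u < 1 := by
      apply lt_of_lt_of_le h2
      rw [div_le_one hbT]
      have : (k:ℝ) + 1 ≤ ((b^T : ℕ) : ℝ) := by exact_mod_cast hklt
      calc (k:ℝ) + 1 ≤ ((b^T : ℕ):ℝ) := this
        _ = (b:ℝ)^T := by push_cast; ring
    have hfl : ⌊u * (b:ℝ)^T⌋₊ = k := by
      apply Nat.floor_eq_iff (by positivity) |>.mpr
      constructor
      · rw [div_le_iff₀ hbT] at h1; linarith
      · rw [lt_div_iff₀ hbT] at h2; linarith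
    refine ⟨?_, hu0, hu1⟩
    intro i hi
    rw [digit_eq_extract hb hu0 hi, hfl, hk',
      extract hb _ (fun e he => ha _ (by omega)) (show T - 1 - i < T by omega),
      show T - 1 - (T-1-i) = i by omega]


def extFn {b T : ℕ} (a : Fin T → Fin b) : ℕ → ℕ :=
  fun i => if h : i < T then (a ⟨i, h⟩ : ℕ) else 0

def DigDep (T : ℕ) (φ : (ℕ → ℕ) → Prop) : Prop :=
  ∀ f g, (∀ i < T, f i = g i) → (φ f ↔ φ g)

lemma P0_apply (S : Set ℝ) : P0 S = volume (S ∩ Set.Ico (0:ℝ) 1) :=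
  Measure.restrict_apply' measurableSet_Ico

lemma P0_univ : P0 Set.univ = 1 := by
  rw [P0_apply, Set.univ_inter, Real.volume_Ico]
  norm_num

lemma P0_le_one (S : Set ℝ) : P0 S ≤ 1 := by
  rw [← P0_univ]; exact measure_mono (Set.subset_univ _)

lemma P0_ne_top (S : Set ℝ) : P0 S ≠ ⊤ :=
  ne_top_of_le_ne_top (by norm_num) (P0_le_one S)

/-- Counting formula: probability of an event depending on the first `T` digits. -/
lemma count_prob {b : ℕ} (hb : 1 ≤ b) {T : ℕ} (φ : (ℕ → ℕ) → Prop) (hφ : DigDep T φ) :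
    P0 {u | φ (fun i => digit b i u)} =
      (∑ a : Fin T → Fin b, I (φ (extFn a))) * (((b:ℝ≥0∞)) ^ T)⁻¹ := by
  classical
  have hb0 : (0:ℝ) < b := by exact_mod_cast hb
  set S := {u : ℝ | φ (fun i => digit b i u)} with hS
  set Cyl : (Fin T → Fin b) → Set ℝ := fun a =>
    Set.Ico (((∑ i ∈ range T, extFn a i * b ^ (T-1-i) : ℕ) : ℝ) / (b:ℝ)^T)
            ((((∑ i ∈ range T, extFn a i * b ^ (T-1-i) : ℕ) : ℝ) + 1) / (b:ℝ)^T) with hCyldef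
  have haext : ∀ (a : Fin T → Fin b), ∀ i < T, extFn a i < b := by
    intro a i hi
    simp only [extFn, dif_pos hi]
    exact (a ⟨i, hi⟩).isLt
  have hCyl : ∀ a, {u : ℝ | ∀ i < T, digit b i u = extFn a i} ∩ Set.Ico (0:ℝ) 1 = Cyl a :=
    fun a => cylinder_eq hb (extFn a) (haext a)
  have hCylsub : ∀ a, Cyl a ⊆ Set.Ico (0:ℝ) 1 := by
    intro a u hu
    rw [← hCyl a] at hu
    exact hu.2
  have hmemCyl : ∀ (a : Fin T → Fin b) (u : ℝ), u ∈ Cyl a → ∀ i < T, digit b i u = extFn a i := by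
    intro a u hu
    rw [← hCyl a] at hu
    exact hu.1
  -- decompose
  have hvol : ∀ a, volume (Cyl a) = ((b:ℝ≥0∞) ^ T)⁻¹ := by
    intro a
    rw [hCyldef]
    rw [Real.volume_Ico]
    have : (((∑ i ∈ range T, extFn a i * b ^ (T-1-i) : ℕ) : ℝ) + 1) / (b:ℝ)^T
        - ((∑ i ∈ range T, extFn a i * b ^ (T-1-i) : ℕ) : ℝ) / (b:ℝ)^T = ((b:ℝ)^T)⁻¹ := by
      field_simp
      ring
    rw [this, ENNReal.ofReal_inv_of_pos (by positivity)]
    congr 1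
    rw [ENNReal.ofReal_pow (le_of_lt hb0), ENNReal.ofReal_natCast b]
  have hSCyl : ∀ a, S ∩ Cyl a = if φ (extFn a) then Cyl a else ∅ := by
    intro a
    by_cases hφa : φ (extFn a)
    · rw [if_pos hφa]
      apply Set.inter_eq_self_of_subset_right
      intro u hu
      have := hmemCyl a u hu
      exact hS ▸ ((hφ (fun i => digit b i u) (extFn a) this).mpr hφa)
    · rw [if_neg hφa]
      ext u
      simp only [Set.mem_inter_iff, Set.mem_empty_iff_false, iff_false, not_and]
      intro huS huC
      exact hφa ((hφ (fun i => digit b i u) (extFn a) (hmemCyl a u huC)).mp huS)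
  have hcover : S ∩ Set.Ico (0:ℝ) 1 = ⋃ a ∈ (Finset.univ : Finset (Fin T → Fin b)), S ∩ Cyl a := by
    ext u
    simp only [Set.mem_inter_iff, Set.mem_iUnion, Finset.mem_univ, exists_true_left,
      true_and]
    constructor
    · rintro ⟨huS, huI⟩
      refine ⟨fun i => ⟨digit b (i:ℕ) u, digit_lt hb _ u⟩, huS, ?_⟩
      rw [← hCyl]
      refine ⟨?_, huI⟩
      intro i hi
      simp only [extFn, dif_pos hi]
    · rintro ⟨a, huS, huC⟩
      exact ⟨huS, hCylsub a huC⟩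
  have hdisj : (↑(Finset.univ : Finset (Fin T → Fin b)) : Set (Fin T → Fin b)).PairwiseDisjoint
      (fun a => S ∩ Cyl a) := by
    intro a _ a' _ hne
    apply Set.disjoint_left.mpr
    intro u hu hu'
    apply hne
    funext i
    apply Fin.ext
    have h1 := hmemCyl a u hu.2 i i.isLt
    have h2 := hmemCyl a' u hu'.2 i i.isLt
    have : extFn a (i:ℕ) = extFn a' (i:ℕ) := by rw [← h1, h2]
    simpa only [extFn, dif_pos i.isLt, Fin.eta] using this
  have hmeas : ∀ a ∈ (Finset.univ : Finset (Fin T → Fin b)), MeasurableSet (S ∩ Cyl a) := by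
    intro a _
    rw [hSCyl a]
    by_cases hφa : φ (extFn a)
    · rw [if_pos hφa]; exact measurableSet_Ico
    · rw [if_neg hφa]; exact MeasurableSet.empty
  rw [P0_apply, hcover, measure_biUnion_finset hdisj hmeas]
  rw [Finset.sum_mul]
  refine Finset.sum_congr rfl (fun a _ => ?_)
  rw [hSCyl a]
  by_cases hφa : φ (extFn a)
  · rw [if_pos hφa, hvol a, I_of _ hφa, one_mul]
  · rw [if_neg hφa]
    have : I (φ (extFn a)) = 0 := by simp [I, hφa]
    rw [this, zero_mul]
    exact measure_empty


/-- Independence of events depending on disjoint blocks of digits. -/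
lemma prob_and {b : ℕ} (hb : 1 ≤ b) {s r : ℕ} (φ ψ : (ℕ → ℕ) → Prop)
    (hφ : DigDep s φ) (hψ : DigDep r ψ) :
    P0 {u | φ (fun i => digit b i u) ∧ ψ (fun i => digit b (s + i) u)} =
      P0 {u | φ (fun i => digit b i u)} * P0 {u | ψ (fun i => digit b i u)} := by
  set χ : (ℕ → ℕ) → Prop := fun f => φ f ∧ ψ (fun i => f (s + i)) with hχdef
  have hχ : DigDep (s + r) χ := by
    intro f g h
    exact and_congr (hφ f g (fun i hi => h i (by omega)))
      (hψ _ _ (fun i hi => h (s+i) (by omega)))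
  have h1 : P0 {u | φ (fun i => digit b i u) ∧ ψ (fun i => digit b (s + i) u)}
      = P0 {u | χ (fun i => digit b i u)} := rfl
  rw [h1, count_prob hb χ hχ, count_prob hb φ hφ, count_prob hb ψ hψ]
  have hbne0 : (b:ℝ≥0∞) ≠ 0 := by
    have : b ≠ 0 := by omega
    exact_mod_cast this
  have hbnetop : (b:ℝ≥0∞) ≠ ⊤ := ENNReal.natCast_ne_top b
  have hsum : (∑ a : Fin (s+r) → Fin b, I (χ (extFn a)))
      = (∑ p : Fin s → Fin b, I (φ (extFn p))) * (∑ q : Fin r → Fin b, I (ψ (extFn q))) := by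
    set E : ((Fin s → Fin b) × (Fin r → Fin b)) ≃ (Fin (s+r) → Fin b) :=
      (Equiv.sumArrowEquivProdArrow (Fin s) (Fin r) (Fin b)).symm.trans
        (Equiv.arrowCongr finSumFinEquiv (Equiv.refl (Fin b))) with hE
    have hEval : ∀ (p : Fin s → Fin b) (q : Fin r → Fin b) (j : Fin (s+r)),
        E (p, q) j = Sum.elim p q (finSumFinEquiv.symm j) := by
      intro p q j
      rfl
    have hterm : ∀ pq : (Fin s → Fin b) × (Fin r → Fin b),
        I (φ (extFn pq.1) ∧ ψ (extFn pq.2)) = I (χ (extFn (E pq))) := by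
      rintro ⟨p, q⟩
      apply I_congr
      have hφeq : φ (extFn p) ↔ φ (extFn (E (p,q))) := by
        apply hφ
        intro i hi
        have hisr : i < s + r := by omega
        have hcast : (⟨i, hisr⟩ : Fin (s+r)) = Fin.castAdd r ⟨i, hi⟩ := rfl
        simp only [extFn, dif_pos hi, dif_pos hisr, hEval, hcast,
          finSumFinEquiv_symm_apply_castAdd, Sum.elim_inl]
      have hψeq : ψ (extFn q) ↔ ψ (fun i => extFn (E (p,q)) (s + i)) := by
        apply hψ
        intro i hi
        have hisr : s + i < s + r := by omega
        have hcast : (⟨s + i, hisr⟩ : Fin (s+r)) = Fin.natAdd s ⟨i, hi⟩ := rfl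
        simp only [extFn, dif_pos hi, dif_pos hisr, hEval, hcast,
          finSumFinEquiv_symm_apply_natAdd, Sum.elim_inr]
      show φ (extFn p) ∧ ψ (extFn q) ↔ φ (extFn (E (p,q))) ∧ ψ fun i => extFn (E (p,q)) (s + i)
      exact and_congr hφeq hψeq
    calc ∑ a : Fin (s+r) → Fin b, I (χ (extFn a))
        = ∑ pq : (Fin s → Fin b) × (Fin r → Fin b), I (χ (extFn (E pq))) :=
          (Equiv.sum_comp E (fun a => I (χ (extFn a)))).symm
      _ = ∑ pq : (Fin s → Fin b) × (Fin r → Fin b), I (φ (extFn pq.1)) * I (ψ (extFn pq.2)) := by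
          refine Finset.sum_congr rfl (fun pq _ => ?_)
          rw [← hterm pq, I_and]
      _ = (∑ p : Fin s → Fin b, I (φ (extFn p))) * (∑ q : Fin r → Fin b, I (ψ (extFn q))) := by
          rw [Finset.sum_mul_sum, Fintype.sum_prod_type]
  rw [hsum, pow_add, ENNReal.mul_inv (Or.inl (pow_ne_zero _ hbne0))
    (Or.inl (ENNReal.pow_ne_top hbnetop))]
  ring


def SW (d t : ℕ) (f : ℕ → ℕ) : Fin d → ℤ := ∑ i ∈ range t, stepVec d (f i)

lemma SW_congr {d t : ℕ} {f g : ℕ → ℕ} (h : ∀ i < t, f i = g i) : SW d t f = SW d t g :=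
  Finset.sum_congr rfl (fun i hi => by rw [h i (Finset.mem_range.mp hi)])

lemma SW_add {d : ℕ} (s r : ℕ) (f : ℕ → ℕ) :
    SW d (s + r) f = SW d s f + SW d r (fun i => f (s + i)) :=
  sum_range_split _ s r

lemma measurable_digit (b i : ℕ) : Measurable (fun u : ℝ => digit b i u) := by
  have h1 : Measurable fun u : ℝ => u * (b:ℝ)^(i+1) := measurable_id.mul_const _
  exact (measurable_of_countable (fun z : ℤ => z.toNat % b)).comp (Int.measurable_floor.comp h1)

lemma measurable_SWdig (d b s t : ℕ) :
    Measurable (fun u : ℝ => SW d t (fun i => digit b (s + i) u)) := by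
  apply measurable_pi_lambda
  intro j
  have heq : (fun u : ℝ => SW d t (fun i => digit b (s + i) u) j)
      = fun u : ℝ => ∑ i ∈ range t, stepVec d (digit b (s+i) u) j := by
    funext u
    simp [SW, Finset.sum_apply]
  rw [heq]
  exact Finset.measurable_sum _ (fun i _ =>
    (measurable_of_countable (fun n : ℕ => stepVec d n j)).comp (measurable_digit b (s+i)))

lemma measurableSet_SWdig_eq (d b s t : ℕ) (v : Fin d → ℤ) :
    MeasurableSet {u : ℝ | SW d t (fun i => digit b (s + i) u) = v} := by
  have heq : {u : ℝ | SW d t (fun i => digit b (s + i) u) = v}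
      = ⋂ j : Fin d, (fun u : ℝ => SW d t (fun i => digit b (s + i) u) j) ⁻¹' {v j} := by
    ext u
    simp [funext_iff]
  rw [heq]
  exact MeasurableSet.iInter fun j =>
    ((measurable_pi_apply j).comp (measurable_SWdig d b s t)) (measurableSet_singleton _)

lemma digDep_SW_eq (d t : ℕ) (v : Fin d → ℤ) : DigDep t (fun f => SW d t f = v) := by
  intro f g h
  show SW d t f = v ↔ SW d t g = v
  rw [SW_congr h]

lemma prob_SW (d : ℕ) (hd : 1 ≤ d) (t : ℕ) (v : Fin d → ℤ) :
    P0 {u | SW d t (fun i => digit (2*d) i u) = v} =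
      (∑ a : Fin t → Fin (2*d), I (SW d t (extFn a) = v)) * ((((2*d : ℕ)):ℝ≥0∞) ^ t)⁻¹ :=
  count_prob (by omega) (fun f => SW d t f = v) (digDep_SW_eq d t v)

lemma stepVec_mod_neg {d : ℕ} (hd : 1 ≤ d) {j : ℕ} (hj : j < 2*d) :
    stepVec d ((j + d) % (2*d)) = - stepVec d j := by
  rcases lt_or_ge j d with h | h
  · have hmod : (j + d) % (2*d) = j + d := Nat.mod_eq_of_lt (by omega)
    rw [hmod]
    funext i
    have h1 : ¬ (j + d < d) := by omega
    simp only [stepVec, if_neg h1, if_pos h, Pi.neg_apply]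
    rw [show j + d - d = j by omega]
    by_cases hij : (i:ℕ) = j <;> simp [hij]
  · have hmod : (j + d) % (2*d) = j - d := by
      rw [Nat.mod_eq_sub_mod (by omega), show j + d - 2*d = j - d by omega]
      exact Nat.mod_eq_of_lt (by omega)
    rw [hmod]
    funext i
    have h1 : j - d < d := by omega
    have h2 : ¬ (j < d) := by omega
    simp only [stepVec, if_pos h1, if_neg h2, Pi.neg_apply]
    by_cases hij : (i:ℕ) = j - d <;> simp [hij]

lemma sum_I_SW_neg (d : ℕ) (hd : 1 ≤ d) (t : ℕ) (v : Fin d → ℤ) :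
    (∑ a : Fin t → Fin (2*d), I (SW d t (extFn a) = v))
      = ∑ a : Fin t → Fin (2*d), I (SW d t (extFn a) = -v) := by
  have hd2 : 0 < 2*d := by omega
  set σ : (Fin t → Fin (2*d)) → (Fin t → Fin (2*d)) :=
    fun a i => ⟨((a i : ℕ) + d) % (2*d), Nat.mod_lt _ hd2⟩ with hσ
  have hinv : Function.Involutive σ := by
    intro a
    funext i
    apply Fin.ext
    show (((a i : ℕ) + d) % (2*d) + d) % (2*d) = (a i : ℕ)
    rw [Nat.mod_add_mod, show (a i : ℕ) + d + d = (a i : ℕ) + 2*d by ring,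
      Nat.add_mod_right]
    exact Nat.mod_eq_of_lt (a i).isLt
  apply Fintype.sum_bijective σ hinv.bijective
  intro a
  apply I_congr
  have hSWneg : SW d t (extFn (σ a)) = - SW d t (extFn a) := by
    rw [SW, SW, ← Finset.sum_neg_distrib]
    refine Finset.sum_congr rfl (fun i hi => ?_)
    have hit : i < t := Finset.mem_range.mp hi
    have e1 : extFn (σ a) i = ((a ⟨i, hit⟩ : ℕ) + d) % (2*d) := by
      simp [extFn, dif_pos hit, hσ]
    have e2 : extFn a i = (a ⟨i, hit⟩ : ℕ) := by simp [extFn, dif_pos hit]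
    rw [e1, e2, stepVec_mod_neg hd (a ⟨i, hit⟩).isLt]
  rw [hSWneg]
  exact neg_inj.symm

lemma exists_path (d : ℕ) (hd : 1 ≤ d) (v : Fin d → ℤ) :
    ∃ (s : ℕ) (a : ℕ → ℕ), (∀ i, a i < 2*d) ∧ SW d s a = v := by
  have main : ∀ (n : ℕ) (v : Fin d → ℤ), (∑ i, (v i).natAbs) = n →
      ∃ (s : ℕ) (a : ℕ → ℕ), (∀ i, a i < 2*d) ∧ SW d s a = v := by
    intro n
    induction n using Nat.strong_induction_on with
    | _ n ih =>
      intro v hn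
      by_cases h0 : n = 0
      · subst h0
        have : ∀ i, v i = 0 := by
          intro i
          have := Finset.sum_eq_zero_iff.mp hn i (Finset.mem_univ i)
          omega
        refine ⟨0, fun _ => 0, fun _ => by show 0 < 2*d; omega, ?_⟩
        rw [SW]
        simp only [Finset.range_zero, Finset.sum_empty]
        funext i
        exact (this i).symm
      · have : ∃ i₀, v i₀ ≠ 0 := by
          by_contra hno
          push_neg at hno
          apply h0
          rw [← hn]
          apply Finset.sum_eq_zero
          intro i _
          rw [hno i]
          rfl
        obtain ⟨i₀, hi₀⟩ := this
        set j : ℕ := if 0 < v i₀ then (i₀:ℕ) else (i₀:ℕ) + d with hj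
        have hjlt : j < 2*d := by
          rw [hj]
          split <;> omega
        have hstep : ∀ i : Fin d, stepVec d j i
            = if (i:ℕ) = (i₀:ℕ) then (if 0 < v i₀ then 1 else -1) else 0 := by
          intro i
          rw [hj]
          by_cases hpos : 0 < v i₀
          · simp only [if_pos hpos, stepVec, if_pos i₀.isLt]
          · have h1 : ¬ ((i₀:ℕ) + d < d) := by omega
            simp only [if_neg hpos, stepVec, if_neg h1,
              show (i₀:ℕ) + d - d = (i₀:ℕ) by omega]
        set v' : Fin d → ℤ := v - stepVec d j with hv'
        have hv'i : ∀ i, i ≠ i₀ → v' i = v i := by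
          intro i hne
          have : (i:ℕ) ≠ (i₀:ℕ) := fun hh => hne (Fin.ext hh)
          simp [hv', hstep i, this]
        have hv'i₀ : (v' i₀).natAbs = (v i₀).natAbs - 1 := by
          have : v' i₀ = v i₀ - (if 0 < v i₀ then 1 else -1) := by
            simp [hv', hstep i₀]
          rw [this]
          by_cases hpos : 0 < v i₀ <;> simp [hpos] <;> omega
        have hsum' : (∑ i, (v' i).natAbs) = n - 1 := by
          have herase : ∑ i ∈ Finset.univ.erase i₀, (v' i).natAbs
              = ∑ i ∈ Finset.univ.erase i₀, (v i).natAbs := by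
            refine Finset.sum_congr rfl (fun i hi => ?_)
            rw [hv'i i (Finset.ne_of_mem_erase hi)]
          have hsplit1 : (∑ i, (v i).natAbs)
              = (v i₀).natAbs + ∑ i ∈ Finset.univ.erase i₀, (v i).natAbs :=
            (Finset.add_sum_erase Finset.univ _ (Finset.mem_univ i₀)).symm
          have hsplit2 : (∑ i, (v' i).natAbs)
              = (v' i₀).natAbs + ∑ i ∈ Finset.univ.erase i₀, (v' i).natAbs :=
            (Finset.add_sum_erase Finset.univ _ (Finset.mem_univ i₀)).symm
          rw [hsplit2, herase, hv'i₀]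
          rw [hsplit1] at hn
          have hpos : 1 ≤ (v i₀).natAbs := by
            have := Int.natAbs_pos.mpr hi₀
            omega
          omega
        obtain ⟨s, a, ha, hSW⟩ := ih (n-1) (by omega) v' hsum'
        refine ⟨s + 1, fun i => if i < s then a i else j, fun i => by show (if i < s then a i else j) < 2*d; split <;> [exact ha i; exact hjlt], ?_⟩
        rw [SW, Finset.sum_range_succ]
        have hagree : ∑ i ∈ range s, stepVec d (if i < s then a i else j)
            = SW d s a := by
          refine Finset.sum_congr rfl (fun i hi => ?_)
          rw [if_pos (Finset.mem_range.mp hi)]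
        rw [hagree, hSW, if_neg (lt_irrefl s), hv']
        abel
  exact main _ v rfl


/-- Event of never returning to the starting point. -/
def Esc0 (d : ℕ) : Set ℝ :=
  {u | ∀ t, 1 ≤ t → SW d t (fun i => digit (2*d) i u) ≠ 0}

lemma measurableSet_SWdig_eq' (d b t : ℕ) (v : Fin d → ℤ) :
    MeasurableSet {u : ℝ | SW d t (fun i => digit b i u) = v} := by
  have h := measurableSet_SWdig_eq d b 0 t v
  simpa using h

lemma digDep_SW_bdd (d m : ℕ) : DigDep m (fun f => ∀ r, 1 ≤ r → r ≤ m → SW d r f ≠ 0) := by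
  intro f g h
  constructor <;> intro hf r h1 h2 <;>
    [rw [← SW_congr (fun i hi => h i (by omega))]; rw [SW_congr (fun i hi => h i (by omega))]] <;>
    exact hf r h1 h2

/-- Last-exit decomposition bound. -/
lemma partial_sum_le (d : ℕ) (hd : 1 ≤ d) (T : ℕ) :
    (∑ s ∈ range (T+1), P0 {u | SW d s (fun i => digit (2*d) i u) = 0}) * P0 (Esc0 d) ≤ 1 := by
  classical
  set b := 2*d with hb
  have hb1 : 1 ≤ b := by omega
  set G : ℕ → Set ℝ := fun s => {u | SW d s (fun i => digit b i u) = 0 ∧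
      ∀ r, 1 ≤ r → r ≤ T - s → SW d r (fun i => digit b (s + i) u) ≠ 0} with hG
  have hGprob : ∀ s, P0 (G s) = P0 {u | SW d s (fun i => digit b i u) = 0}
      * P0 {u | ∀ r, 1 ≤ r → r ≤ T - s → SW d r (fun i => digit b i u) ≠ 0} := by
    intro s
    exact prob_and hb1 (fun f => SW d s f = 0)
      (fun f => ∀ r, 1 ≤ r → r ≤ T - s → SW d r f ≠ 0)
      (digDep_SW_eq d s 0) (digDep_SW_bdd d (T - s))
  have hGmeas : ∀ s, MeasurableSet (G s) := by
    intro s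
    have heq : G s = {u | SW d s (fun i => digit b i u) = 0} ∩
        ⋂ r, ⋂ (_ : 1 ≤ r), ⋂ (_ : r ≤ T - s),
          ({u : ℝ | SW d r (fun i => digit b (s + i) u) = 0})ᶜ := by
      ext u
      simp only [hG, Set.mem_setOf_eq, Set.mem_inter_iff, Set.mem_iInter, Set.mem_compl_iff]
    rw [heq]
    exact (measurableSet_SWdig_eq' d b s 0).inter
      (MeasurableSet.iInter fun r => MeasurableSet.iInter fun _ =>
        MeasurableSet.iInter fun _ => (measurableSet_SWdig_eq d b s r 0).compl)
  have hcover : ⋃ s ∈ range (T+1), G s = Set.univ := by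
    apply Set.eq_univ_of_forall
    intro u
    set F := (range (T+1)).filter (fun t => SW d t (fun i => digit b i u) = 0) with hF
    have h0F : (0:ℕ) ∈ F := by
      apply Finset.mem_filter.mpr
      refine ⟨Finset.mem_range.mpr (by omega), ?_⟩
      simp [SW]
    set sm := F.max' ⟨0, h0F⟩ with hsm
    have hsmF : sm ∈ F := F.max'_mem _
    have hsm1 : sm ≤ T := by
      have := (Finset.mem_filter.mp hsmF).1
      rw [Finset.mem_range] at this
      omega
    have hsm2 : SW d sm (fun i => digit b i u) = 0 := (Finset.mem_filter.mp hsmF).2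
    apply Set.mem_iUnion₂.mpr
    refine ⟨sm, Finset.mem_range.mpr (by omega), hsm2, ?_⟩
    intro r h1 h2 hcontra
    have h : SW d (sm + r) (fun i => digit b i u)
        = SW d sm (fun i => digit b i u) + SW d r (fun i => digit b (sm + i) u) :=
      SW_add (d := d) sm r (fun i => digit b i u)
    rw [hsm2, hcontra, add_zero] at h
    have hmem : sm + r ∈ F := by
      apply Finset.mem_filter.mpr
      exact ⟨Finset.mem_range.mpr (by omega), h⟩
    have := F.le_max' _ hmem
    omega
  have hdisj_aux : ∀ s s', s < s' → s' ≤ T → Disjoint (G s) (G s') := by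
    intro s s' hlt hle
    apply Set.disjoint_left.mpr
    rintro u ⟨h1, h2⟩ ⟨h1', _⟩
    have hr1 : 1 ≤ s' - s := by omega
    have hr2 : s' - s ≤ T - s := by omega
    apply h2 (s' - s) hr1 hr2
    have h : SW d (s + (s' - s)) (fun i => digit b i u)
        = SW d s (fun i => digit b i u) + SW d (s' - s) (fun i => digit b (s + i) u) :=
      SW_add (d := d) s (s' - s) (fun i => digit b i u)
    rw [show s + (s' - s) = s' from by omega, h1', h1, zero_add] at h
    exact h.symm
  have hdisj : (↑(range (T+1)) : Set ℕ).PairwiseDisjoint G := by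
    intro s hs s' hs' hne
    have hsT : s ≤ T := by
      have := Finset.mem_range.mp (Finset.mem_coe.mp hs); omega
    have hs'T : s' ≤ T := by
      have := Finset.mem_range.mp (Finset.mem_coe.mp hs'); omega
    rcases lt_or_gt_of_ne hne with h | h
    · exact hdisj_aux s s' h hs'T
    · exact (hdisj_aux s' s h hsT).symm
  have hsum : ∑ s ∈ range (T+1), P0 (G s) = 1 := by
    have h := measure_biUnion_finset (μ := P0) hdisj (fun s _ => hGmeas s)
    rw [hcover, P0_univ] at h
    exact h.symm
  calc (∑ s ∈ range (T+1), P0 {u | SW d s (fun i => digit b i u) = 0}) * P0 (Esc0 d)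
      = ∑ s ∈ range (T+1), P0 {u | SW d s (fun i => digit b i u) = 0} * P0 (Esc0 d) :=
        Finset.sum_mul _ _ _
    _ ≤ ∑ s ∈ range (T+1), P0 (G s) := by
        apply Finset.sum_le_sum
        intro s _
        rw [hGprob s]
        apply mul_le_mul_right
        apply measure_mono
        intro u hu r h1 _
        exact hu r h1
    _ = 1 := hsum

/-- If escape probability is positive, all Green's function values are finite. -/
lemma gE_ne_top (d : ℕ) (hd : 1 ≤ d) (hε : P0 (Esc0 d) ≠ 0) (v : Fin d → ℤ) :
    (∑' t, P0 {u | SW d t (fun i => digit (2*d) i u) = v}) ≠ ⊤ := by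
  have hb1 : 1 ≤ 2*d := by omega
  set ε := P0 (Esc0 d) with hεdef
  have h00 : (∑' t, P0 {u | SW d t (fun i => digit (2*d) i u) = 0}) ≤ ε⁻¹ := by
    apply Summable.tsum_le_of_sum_range_le ENNReal.summable
    intro n
    have hle : ∑ i ∈ range n, P0 {u | SW d i (fun i' => digit (2*d) i' u) = 0}
        ≤ ∑ i ∈ range (n+1), P0 {u | SW d i (fun i' => digit (2*d) i' u) = 0} :=
      Finset.sum_le_sum_of_subset (Finset.range_subset_range.mpr (by omega))
    refine le_trans hle ?_
    rw [ENNReal.le_inv_iff_mul_le]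
    exact partial_sum_le d hd n
  obtain ⟨s, a, ha, hSWa⟩ := exists_path d hd (-v)
  set c := P0 {u | SW d s (fun i => digit (2*d) i u) = -v} with hcdef
  have hbpow : (((2*d:ℕ)):ℝ≥0∞) ^ s ≠ ⊤ := ENNReal.pow_ne_top (ENNReal.natCast_ne_top _)
  have hc : ((((2*d:ℕ)):ℝ≥0∞) ^ s)⁻¹ ≤ c := by
    rw [hcdef, prob_SW d hd s (-v)]
    have h1 : (1:ℝ≥0∞) ≤ ∑ a' : Fin s → Fin (2*d), I (SW d s (extFn a') = -v) := by
      set aa : Fin s → Fin (2*d) := fun i => ⟨a i, ha i⟩ with haa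
      have hI : I (SW d s (extFn aa) = -v) = 1 := by
        apply I_of
        rw [SW_congr (show ∀ i < s, extFn aa i = a i from fun i hi => by
          simp [extFn, dif_pos hi, haa])]
        exact hSWa
      rw [← hI]
      exact Finset.single_le_sum (f := fun a' : Fin s → Fin (2*d) => I (SW d s (extFn a') = -v))
        (fun _ _ => zero_le) (Finset.mem_univ aa)
    calc ((((2*d:ℕ)):ℝ≥0∞) ^ s)⁻¹ = 1 * ((((2*d:ℕ)):ℝ≥0∞) ^ s)⁻¹ := (one_mul _).symm
      _ ≤ (∑ a' : Fin s → Fin (2*d), I (SW d s (extFn a') = -v)) * ((((2*d:ℕ)):ℝ≥0∞) ^ s)⁻¹ :=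
        mul_le_mul_left h1 _
  have hc0 : c ≠ 0 := by
    have hpos : (0:ℝ≥0∞) < ((((2*d:ℕ)):ℝ≥0∞) ^ s)⁻¹ := ENNReal.inv_pos.mpr hbpow
    exact (lt_of_lt_of_le hpos hc).ne'
  have key : ∀ t, P0 {u | SW d t (fun i => digit (2*d) i u) = v} * c
      ≤ P0 {u | SW d (t+s) (fun i => digit (2*d) i u) = 0} := by
    intro t
    have hpa := prob_and hb1 (fun f => SW d t f = v) (fun f => SW d s f = -v)
      (digDep_SW_eq d t v) (digDep_SW_eq d s (-v))
    rw [hcdef, ← hpa]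
    apply measure_mono
    rintro u ⟨h1, h2⟩
    show SW d (t+s) (fun i => digit (2*d) i u) = 0
    have h : SW d (t + s) (fun i => digit (2*d) i u)
        = SW d t (fun i => digit (2*d) i u) + SW d s (fun i => digit (2*d) (t + i) u) :=
      SW_add (d := d) t s (fun i => digit (2*d) i u)
    rw [h1, h2] at h
    rw [h]
    exact add_neg_cancel v
  have hmain : (∑' t, P0 {u | SW d t (fun i => digit (2*d) i u) = v}) * c ≤ ε⁻¹ :=
    calc (∑' t, P0 {u | SW d t (fun i => digit (2*d) i u) = v}) * c
        = ∑' t, P0 {u | SW d t (fun i => digit (2*d) i u) = v} * c := ENNReal.tsum_mul_right.symm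
      _ ≤ ∑' t, P0 {u | SW d (t+s) (fun i => digit (2*d) i u) = 0} := ENNReal.tsum_le_tsum key
      _ ≤ ∑' n, P0 {u | SW d n (fun i => digit (2*d) i u) = 0} :=
          ENNReal.tsum_comp_le_tsum_of_injective (add_left_injective s) _
      _ ≤ ε⁻¹ := h00
  have hfin : (∑' t, P0 {u | SW d t (fun i => digit (2*d) i u) = v}) ≤ ε⁻¹ / c :=
    (ENNReal.le_div_iff_mul_le (Or.inl hc0) (Or.inl (P0_ne_top _))).mpr hmain
  apply ne_top_of_le_ne_top _ hfin
  rw [div_eq_mul_inv]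
  exact ENNReal.mul_ne_top (ENNReal.inv_ne_top.mpr hε) (ENNReal.inv_ne_top.mpr hc0)

lemma walk_event_eq (d : ℕ) (x y : Fin d → ℤ) (t : ℕ) :
    {u : ℝ | walk d x u t = y} = {u | SW d t (fun i => digit (2*d) i u) = y - x} := by
  ext u
  simp only [Set.mem_setOf_eq]
  constructor
  · intro h
    rw [eq_sub_iff_add_eq, add_comm]
    exact h
  · intro h
    show x + SW d t (fun i => digit (2*d) i u) = y
    rw [h]
    abel


end CapaAux

open CapaAux

/-- **Lower bound for the capacity of a union.** For `d ≥ 3` and finite `A, B ⊆ ℤ^d`,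
`cap(A ∪ B) ≥ cap(A) + cap(B) − 2 ∑_{x ∈ A} ∑_{y ∈ B} G(x,y)`. -/
theorem capa_union_ge (d : ℕ) (hd : 3 ≤ d) (A B : Finset (Fin d → ℤ)) :
    capa d A + capa d B - 2 * ∑ x ∈ A, ∑ y ∈ B, green d x y ≤ capa d (A ∪ B) := by
  classical
  have hd1 : 1 ≤ d := by omega
  have hgreen_nonneg : ∀ x y : Fin d → ℤ, 0 ≤ green d x y := fun x y => ENNReal.toReal_nonneg
  have hesc_nonneg : ∀ (S : Set (Fin d → ℤ)) x, 0 ≤ escProb d S x :=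
    fun S x => ENNReal.toReal_nonneg
  have hcapa_nonneg : ∀ C : Finset (Fin d → ℤ), 0 ≤ capa d C :=
    fun C => Finset.sum_nonneg fun x _ => hesc_nonneg _ _
  have hgg : (0:ℝ) ≤ ∑ x ∈ A, ∑ y ∈ B, green d x y :=
    Finset.sum_nonneg fun x _ => Finset.sum_nonneg fun y _ => hgreen_nonneg x y
  by_cases hε : P0 (Esc0 d) = 0
  · -- "recurrent" case: all escape probabilities vanish
    have hcapa0 : ∀ C : Finset (Fin d → ℤ), capa d C = 0 := by
      intro C
      apply Finset.sum_eq_zero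
      intro x hx
      suffices h : P0 {u : ℝ | ∀ t, 1 ≤ t → walk d x u t ∉ (↑C : Set (Fin d → ℤ))} = 0 by
        rw [escProb, h, ENNReal.toReal_zero]
      apply le_antisymm _ (zero_le)
      rw [← hε]
      apply measure_mono
      intro u hu t ht hSW0
      apply hu t ht
      have hwalk : walk d x u t = x := by
        show x + SW d t (fun i => digit (2*d) i u) = x
        rw [hSW0, add_zero]
      rw [hwalk]
      exact Finset.mem_coe.mpr hx
    rw [hcapa0 A, hcapa0 B]
    have := hcapa_nonneg (A ∪ B)
    linarith
  · -- "transient" case: all Green kernel values finite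
    have hfin : ∀ (x y : Fin d → ℤ), (∑' t, P0 {u | walk d x u t = y}) ≠ ⊤ := by
      intro x y
      have heq : (∑' t, P0 {u | walk d x u t = y})
          = ∑' t, P0 {u | SW d t (fun i => digit (2*d) i u) = y - x} :=
        tsum_congr fun t => by rw [walk_event_eq]
      rw [heq]
      exact gE_ne_top d hd1 hε (y - x)
    have hesc_le : ∀ (C D : Finset (Fin d → ℤ)) (x : Fin d → ℤ),
        escProb d ↑C x ≤ escProb d ↑(C ∪ D) x + ∑ y ∈ D, green d x y := by
      intro C D x
      have hsub : {u : ℝ | ∀ t, 1 ≤ t → walk d x u t ∉ (↑C : Set (Fin d → ℤ))} ⊆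
          {u : ℝ | ∀ t, 1 ≤ t → walk d x u t ∉ (↑(C ∪ D) : Set (Fin d → ℤ))}
            ∪ ⋃ y ∈ D, ⋃ t : ℕ, {u : ℝ | walk d x u t = y} := by
        intro u h1
        by_cases h2 : ∀ t, 1 ≤ t → walk d x u t ∉ (↑(C ∪ D) : Set (Fin d → ℤ))
        · exact Or.inl h2
        · right
          push_neg at h2
          obtain ⟨t, ht, hmem⟩ := h2
          rw [Finset.coe_union] at hmem
          rcases hmem with hC | hD
          · exact absurd hC (h1 t ht)
          · exact Set.mem_iUnion₂.mpr ⟨walk d x u t, Finset.mem_coe.mp hD,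
              Set.mem_iUnion.mpr ⟨t, rfl⟩⟩
      have hmeasH : P0 (⋃ y ∈ D, ⋃ t : ℕ, {u : ℝ | walk d x u t = y})
          ≤ ∑ y ∈ D, ∑' t, P0 {u | walk d x u t = y} :=
        le_trans (measure_biUnion_finset_le D _)
          (Finset.sum_le_sum fun y _ => measure_iUnion_le _)
      have hENN : P0 {u : ℝ | ∀ t, 1 ≤ t → walk d x u t ∉ (↑C : Set (Fin d → ℤ))}
          ≤ P0 {u : ℝ | ∀ t, 1 ≤ t → walk d x u t ∉ (↑(C ∪ D) : Set (Fin d → ℤ))}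
            + ∑ y ∈ D, ∑' t, P0 {u | walk d x u t = y} :=
        le_trans (measure_mono hsub)
          (le_trans (measure_union_le _ _) (add_le_add le_rfl hmeasH))
      have hne2 : P0 {u : ℝ | ∀ t, 1 ≤ t → walk d x u t ∉ (↑(C ∪ D) : Set (Fin d → ℤ))} ≠ ⊤ :=
        P0_ne_top _
      have hneS : (∑ y ∈ D, ∑' t, P0 {u | walk d x u t = y}) ≠ ⊤ :=
        ENNReal.sum_ne_top.mpr fun y _ => hfin x y
      have hR := ENNReal.toReal_mono (ENNReal.add_ne_top.mpr ⟨hne2, hneS⟩) hENN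
      rw [ENNReal.toReal_add hne2 hneS, ENNReal.toReal_sum (fun y _ => hfin x y)] at hR
      exact hR
    have hesc_self : ∀ (S : Set (Fin d → ℤ)) (x : Fin d → ℤ), escProb d S x ≤ green d x x := by
      intro S x
      have h1 : escProb d S x ≤ 1 := by
        have := ENNReal.toReal_mono (by norm_num : (1:ℝ≥0∞) ≠ ⊤)
          (P0_le_one {u : ℝ | ∀ t, 1 ≤ t → walk d x u t ∉ S})
        simpa [escProb] using this
      have h2 : (1:ℝ) ≤ green d x x := by
        have hone : P0 {u : ℝ | walk d x u 0 = x} = 1 := by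
          have : {u : ℝ | walk d x u 0 = x} = Set.univ := by
            apply Set.eq_univ_of_forall
            intro u
            show x + ∑ i ∈ Finset.range 0, stepVec d (digit (2*d) i u) = x
            simp
          rw [this, P0_univ]
        have hle : (1:ℝ≥0∞) ≤ ∑' t, P0 {u | walk d x u t = x} := by
          rw [← hone]
          exact ENNReal.le_tsum 0
        have := ENNReal.toReal_mono (hfin x x) hle
        simpa [green] using this
      linarith
    have hsymm : ∀ x y : Fin d → ℤ, green d x y = green d y x := by
      intro x y
      have hper : ∀ t : ℕ, P0 {u | walk d x u t = y} = P0 {u | walk d y u t = x} := by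
        intro t
        rw [walk_event_eq d x y t, walk_event_eq d y x t, prob_SW d hd1 t (y - x),
          prob_SW d hd1 t (x - y), show x - y = -(y - x) from (neg_sub y x).symm,
          sum_I_SW_neg d hd1 t (y - x)]
      rw [green, green]
      congr 1
      exact tsum_congr hper
    -- assembly
    have step1 : capa d A ≤ (∑ x ∈ A, escProb d ↑(A ∪ B) x) + ∑ x ∈ A, ∑ y ∈ B, green d x y := by
      rw [capa, ← Finset.sum_add_distrib]
      exact Finset.sum_le_sum fun x _ => hesc_le A B x
    have step2 : capa d B ≤ (∑ x ∈ B \ A, escProb d ↑(A ∪ B) x)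
        + ∑ x ∈ B, ∑ y ∈ A, green d x y := by
      have hsplitL : ∑ x ∈ B ∩ A, escProb d ↑B x + ∑ x ∈ B \ A, escProb d ↑B x = capa d B :=
        Finset.sum_inter_add_sum_sdiff B A _
      have hsplitR : (∑ x ∈ B ∩ A, ∑ y ∈ A, green d x y)
          + ∑ x ∈ B \ A, ∑ y ∈ A, green d x y = ∑ x ∈ B, ∑ y ∈ A, green d x y :=
        Finset.sum_inter_add_sum_sdiff B A _
      have h1 : ∑ x ∈ B ∩ A, escProb d ↑B x ≤ ∑ x ∈ B ∩ A, ∑ y ∈ A, green d x y := by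
        apply Finset.sum_le_sum
        intro x hx
        have hxA : x ∈ A := (Finset.mem_inter.mp hx).2
        calc escProb d ↑B x ≤ green d x x := hesc_self ↑B x
          _ ≤ ∑ y ∈ A, green d x y :=
            Finset.single_le_sum (f := fun y => green d x y)
              (fun y _ => hgreen_nonneg x y) hxA
      have h2 : ∑ x ∈ B \ A, escProb d ↑B x
          ≤ (∑ x ∈ B \ A, escProb d ↑(A ∪ B) x) + ∑ x ∈ B \ A, ∑ y ∈ A, green d x y := by
        rw [← Finset.sum_add_distrib]
        apply Finset.sum_le_sum
        intro x _
        have h := hesc_le B A x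
        rwa [Finset.union_comm B A] at h
      linarith
    have hcapaAB : (∑ x ∈ A, escProb d ↑(A ∪ B) x) + (∑ x ∈ B \ A, escProb d ↑(A ∪ B) x)
        = capa d (A ∪ B) := by
      rw [capa, ← Finset.sum_union Finset.disjoint_sdiff, Finset.union_sdiff_self_eq_union]
    have hswap : ∑ x ∈ B, ∑ y ∈ A, green d x y = ∑ x ∈ A, ∑ y ∈ B, green d x y := by
      rw [Finset.sum_comm]
      exact Finset.sum_congr rfl fun y _ => Finset.sum_congr rfl fun x _ => hsymm x y
    linarith
end
end

section
/- Let d ≥ 5. For all a ∈ ℤ^d and all n ≥ 1, ∑_{x ∈ ℤ^d} ∑_{y ∈ ℤ^d} G_n(0,x) G_n(0,y) G(0, x − y − a) ≤ ∑_{x ∈ ℤ^d} ∑_{y ∈ ℤ^d} G_n(0,x) G_n(0,y) G(0, x − y). -/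
open MeasureTheory ProbabilityTheory Filter

noncomputable section

open scoped ENNReal

/-- Green kernel with values in `ℝ≥0∞`. -/
def greenE (d : ℕ) (x y : Fin d → ℤ) : ℝ≥0∞ := ∑' t : ℕ, P0 {u | walk d x u t = y}

/-- Green kernel up to time `n` (summing over `0 ≤ k ≤ n-1`), with values in `ℝ≥0∞`. -/
def greenNE (d n : ℕ) (x y : Fin d → ℤ) : ℝ≥0∞ :=
  ∑ t ∈ Finset.range n, P0 {u | walk d x u t = y}


namespace GreenAux
open Finset
open scoped NNReal

lemma digit_sum_lt (b : ℕ) (hb : 0 < b) (t : ℕ) (c : ℕ → ℕ) (hc : ∀ i, i < t → c i < b) :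
    ∑ i ∈ range t, c i * b ^ i < b ^ t := by
  induction t with
  | zero => simpa using hb
  | succ t ih =>
    rw [Finset.sum_range_succ]
    have h1 : ∑ i ∈ range t, c i * b ^ i < b ^ t := ih (fun i hi => hc i (by omega))
    have h2 : c t * b ^ t ≤ (b - 1) * b ^ t :=
      Nat.mul_le_mul_right _ (by have := hc t (by omega); omega)
    have h3 : b ^ t + (b - 1) * b ^ t = b ^ (t + 1) := by
      rw [pow_succ]
      have : b ^ t + (b-1) * b ^ t = (1 + (b-1)) * b ^ t := by ring
      rw [this]
      have : 1 + (b - 1) = b := by omega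
      rw [this, mul_comm]
    omega

lemma digit_sum_extract (b : ℕ) (hb : 0 < b) :
    ∀ (t : ℕ) (c : ℕ → ℕ), (∀ i, i < t → c i < b) → ∀ j, j < t →
      (∑ i ∈ range t, c i * b ^ i) / b ^ j % b = c j := by
  intro t
  induction t with
  | zero => intro c _ j hj; omega
  | succ t ih =>
    intro c hc j hj
    have hS : ∑ i ∈ range (t+1), c i * b ^ i = b * (∑ i ∈ range t, c (i+1) * b ^ i) + c 0 := by
      rw [Finset.sum_range_succ', Finset.mul_sum]
      simp only [pow_zero, mul_one]
      congr 1
      refine Finset.sum_congr rfl (fun i _ => ?_)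
      rw [pow_succ]; ring
    rw [hS]
    rcases j with _ | j'
    · simp only [pow_zero, Nat.div_one]
      rw [Nat.mul_add_mod]
      exact Nat.mod_eq_of_lt (hc 0 (by omega))
    · rw [pow_succ', ← Nat.div_div_eq_div_mul, Nat.mul_add_div hb,
        Nat.div_eq_of_lt (hc 0 (by omega)), add_zero]
      exact ih (fun i => c (i+1)) (fun i hi => hc (i+1) (by omega)) j' (by omega)

lemma digit_sum_recover (b : ℕ) (hb : 0 < b) :
    ∀ (t m : ℕ), m < b ^ t → ∑ i ∈ range t, (m / b ^ i % b) * b ^ i = m := by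
  intro t
  induction t with
  | zero => intro m hm; simp at hm ⊢; omega
  | succ t ih =>
    intro m hm
    rw [Finset.sum_range_succ']
    have e1 : ∀ i, m / b ^ (i+1) % b * b ^ (i+1) = b * ((m / b / b ^ i % b) * b ^ i) := by
      intro i
      rw [pow_succ', ← Nat.div_div_eq_div_mul]
      ring
    simp only [e1, pow_zero, Nat.div_one, mul_one]
    rw [← Finset.mul_sum, ih (m / b) (by
      rw [Nat.div_lt_iff_lt_mul hb, ← pow_succ]; exact hm)]
    exact Nat.div_add_mod m b

-- stepVec lemmas and combinatorial walk
lemma stepVec_add_d {d : ℕ} (j : ℕ) (hj : j < d) : stepVec d (d + j) = - stepVec d j := by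
  funext i
  have h1 : ¬ (d + j < d) := by omega
  simp only [stepVec, if_neg h1, if_pos hj, Pi.neg_apply, Nat.add_sub_cancel_left]
  split_ifs <;> simp

def sg (d j : ℕ) : ℕ := if j < d then j + d else j - d

lemma sg_lt {d j : ℕ} (hj : j < 2*d) : sg d j < 2*d := by unfold sg; split_ifs <;> omega

lemma sg_sg {d j : ℕ} (hj : j < 2*d) : sg d (sg d j) = j := by unfold sg; split_ifs <;> omega

lemma stepVec_sg {d j : ℕ} (hj : j < 2*d) : stepVec d (sg d j) = - stepVec d j := by
  unfold sg; split_ifs with h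
  · rw [add_comm]; exact stepVec_add_d j h
  · have hj' : j - d < d := by omega
    have h2 := stepVec_add_d (d := d) (j - d) hj'
    have hd2 : d + (j - d) = j := by omega
    rw [hd2] at h2
    rw [h2, neg_neg]

/-- combinatorial walk read off the base-`2d` digits of `m` -/
def Wk (d t m : ℕ) : Fin d → ℤ :=
  ∑ i ∈ Finset.range t, stepVec d (m / (2*d)^i % (2*d))

/-- number of `t`-step paths from `0` to `v` (times encoding) -/
def cnt (d t : ℕ) (v : Fin d → ℤ) : ℕ :=
  ((Finset.range ((2*d)^t)).filter (fun m => Wk d t m = v)).card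

/-- one-step law of the walk as ENNReal -/
def qq (d t : ℕ) (v : Fin d → ℤ) : ℝ≥0∞ := P0 {u | walk d 0 u t = v}

lemma digit_eq (b t : ℕ) (hb : 0 < b) {u : ℝ} (hu0 : 0 ≤ u) {i : ℕ} (hi : i < t) :
    digit b i u = ⌊u * (b:ℝ) ^ t⌋₊ / b ^ (t - 1 - i) % b := by
  have hbpos : (0:ℝ) < ((b ^ (t-1-i) : ℕ) : ℝ) := by positivity
  have h2 : u * (b:ℝ) ^ (i+1) = u * (b:ℝ) ^ t / ((b ^ (t-1-i) : ℕ) : ℝ) := by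
    rw [eq_div_iff (ne_of_gt hbpos)]
    push_cast
    rw [mul_assoc, ← pow_add]
    have : i + 1 + (t - 1 - i) = t := by omega
    rw [this]
  rw [digit, Int.floor_toNat, h2, Nat.floor_div_natCast]

lemma walk_eq_Wk (d t : ℕ) (hd : 0 < d) {u : ℝ} (hu0 : 0 ≤ u) :
    walk d 0 u t = Wk d t ⌊u * ((2*d : ℕ):ℝ) ^ t⌋₊ := by
  have hb : 0 < 2*d := by omega
  rw [walk, Wk, zero_add]
  conv_rhs => rw [← Finset.sum_range_reflect]
  refine Finset.sum_congr rfl (fun i hi => ?_)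
  rw [Finset.mem_range] at hi
  rw [digit_eq (2*d) t hb hu0 hi]

lemma qq_eq_cnt (d t : ℕ) (hd : 0 < d) (v : Fin d → ℤ) :
    qq d t v = (cnt d t v : ℝ≥0∞) * (((2*d : ℕ) : ℝ≥0∞))⁻¹ ^ t := by
  have hb : 0 < 2*d := by omega
  have hbt : (0:ℝ) < ((2*d : ℕ) : ℝ) ^ t := by positivity
  set b : ℕ := 2*d with hbdef
  have hset : {u : ℝ | walk d 0 u t = v} ∩ Set.Ico (0:ℝ) 1 =
      ⋃ m ∈ (Finset.range (b^t)).filter (fun m => Wk d t m = v),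
        Set.Ico ((m:ℝ)/(b:ℝ)^t) (((m:ℝ)+1)/(b:ℝ)^t) := by
    ext u
    simp only [Set.mem_inter_iff, Set.mem_setOf_eq, Set.mem_Ico, Set.mem_iUnion,
      Finset.mem_filter, Finset.mem_range, exists_prop]
    constructor
    · rintro ⟨hwalk, hu0, hu1⟩
      refine ⟨⌊u * (b:ℝ)^t⌋₊, ⟨?_, ?_⟩, ?_, ?_⟩
      · rw [Nat.floor_lt (by positivity)]
        calc u * (b:ℝ)^t < 1 * (b:ℝ)^t := mul_lt_mul_of_pos_right hu1 hbt
          _ = ((b^t : ℕ) : ℝ) := by push_cast; ring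
      · rw [← walk_eq_Wk d t hd hu0]; exact hwalk
      · rw [div_le_iff₀ hbt]; exact Nat.floor_le (by positivity)
      · rw [lt_div_iff₀ hbt]; exact Nat.lt_floor_add_one _
    · rintro ⟨m, ⟨hm1, hm2⟩, hlo, hhi⟩
      have hu0 : 0 ≤ u := le_trans (by positivity) hlo
      have hum : ((m:ℝ)) ≤ u * (b:ℝ)^t := by rw [← div_le_iff₀ hbt]; exact hlo
      have hum2 : u * (b:ℝ)^t < (m:ℝ) + 1 := by rw [← lt_div_iff₀ hbt]; exact hhi
      have hfl : ⌊u * (b:ℝ)^t⌋₊ = m := by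
        rw [Nat.floor_eq_iff (by positivity)]
        exact ⟨hum, hum2⟩
      refine ⟨?_, hu0, ?_⟩
      · rw [walk_eq_Wk d t hd hu0, hfl]; exact hm2
      · have h3 : (m:ℝ) + 1 ≤ (b:ℝ)^t := by
          have h4 : (m + 1 : ℕ) ≤ b^t := hm1
          calc ((m:ℝ)) + 1 = ((m+1 : ℕ) : ℝ) := by push_cast; ring
            _ ≤ ((b^t : ℕ) : ℝ) := by exact_mod_cast h4
            _ = (b:ℝ)^t := by push_cast; ring
        calc u < ((m:ℝ)+1)/(b:ℝ)^t := hhi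
          _ ≤ 1 := by rw [div_le_one hbt]; exact h3
  have hdisj : (↑((Finset.range (b^t)).filter (fun m => Wk d t m = v)) : Set ℕ).PairwiseDisjoint
      (fun m : ℕ => Set.Ico ((m:ℝ)/(b:ℝ)^t) (((m:ℝ)+1)/(b:ℝ)^t)) := by
    intro m _ m' _ hne
    have key : ∀ k k' : ℕ, k < k' → Disjoint (Set.Ico ((k:ℝ)/(b:ℝ)^t) (((k:ℝ)+1)/(b:ℝ)^t))
        (Set.Ico ((k':ℝ)/(b:ℝ)^t) (((k':ℝ)+1)/(b:ℝ)^t)) := by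
      intro k k' hkk'
      rw [Set.Ico_disjoint_Ico]
      have h1 : ((k:ℝ)+1)/(b:ℝ)^t ≤ (k':ℝ)/(b:ℝ)^t := by
        gcongr
        exact_mod_cast hkk'
      exact inf_le_left.trans (h1.trans le_sup_right)
    rcases lt_or_gt_of_ne hne with h | h
    · exact key m m' h
    · exact (key m' m h).symm
  have hvol : ∀ m : ℕ, volume (Set.Ico ((m:ℝ)/(b:ℝ)^t) (((m:ℝ)+1)/(b:ℝ)^t))
      = (((b:ℕ):ℝ≥0∞))⁻¹ ^ t := by
    intro m
    rw [Real.volume_Ico]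
    have h5 : ((m:ℝ)+1)/(b:ℝ)^t - (m:ℝ)/(b:ℝ)^t = ((b:ℝ)^t)⁻¹ := by
      field_simp
      ring
    have h2 : ENNReal.ofReal ((b:ℝ)^t) = (((b:ℕ):ℝ≥0∞)) ^ t := by
      rw [ENNReal.ofReal_pow (by positivity), ENNReal.ofReal_natCast]
    rw [h5, ENNReal.ofReal_inv_of_pos hbt, h2, ENNReal.inv_pow]
  rw [qq, P0, Measure.restrict_apply' measurableSet_Ico, hset,
    measure_biUnion_finset hdisj (fun m _ => measurableSet_Ico)]
  simp only [hvol]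
  rw [Finset.sum_const, nsmul_eq_mul]
  rfl

lemma Wk_split (d s t m₁ m₂ : ℕ) (hd : 0 < d) (h₁ : m₁ < (2*d)^s) :
    Wk d (s+t) (m₁ + (2*d)^s * m₂) = Wk d s m₁ + Wk d t m₂ := by
  have hb : 0 < 2*d := by omega
  set b : ℕ := 2*d with hbdef
  rw [Wk, Wk, Wk, Finset.sum_range_add]
  congr 1
  · refine Finset.sum_congr rfl (fun i hi => ?_)
    rw [Finset.mem_range] at hi
    congr 1
    have hsplit : b^s * m₂ = b^i * (b^(s-i) * m₂) := by
      rw [← mul_assoc, ← pow_add]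
      congr 2
      omega
    rw [hsplit, Nat.add_mul_div_left _ _ (pow_pos hb i)]
    have h2 : b ^ (s - i) * m₂ = b * (b ^ (s - i - 1) * m₂) := by
      have h3 : s - i = (s - i - 1) + 1 := by omega
      conv_lhs => rw [h3, pow_succ']
      rw [mul_assoc]
    rw [h2, Nat.add_mul_mod_self_left]
  · refine Finset.sum_congr rfl (fun i _ => ?_)
    congr 2
    rw [pow_add, ← Nat.div_div_eq_div_mul,
      Nat.add_mul_div_left _ _ (pow_pos hb s), Nat.div_eq_of_lt h₁, zero_add]

lemma cnt_CK (d s t : ℕ) (hd : 0 < d) (w : Fin d → ℤ) :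
    cnt d (s+t) w = ∑ v ∈ (Finset.range ((2*d)^s)).image (Wk d s),
      cnt d s v * cnt d t (w - v) := by
  classical
  have hb : 0 < 2*d := by omega
  set b : ℕ := 2*d with hbdef
  set I := (Finset.range (b^s)).image (Wk d s) with hI
  set S := ((Finset.range (b^s)) ×ˢ (Finset.range (b^t))).filter
    (fun p => Wk d s p.1 + Wk d t p.2 = w) with hS
  have h1 : cnt d (s+t) w = S.card := by
    apply Finset.card_nbij' (fun m => (m % b^s, m / b^s)) (fun p => p.1 + b^s * p.2)
    · intro m hm
      rw [Finset.mem_coe, Finset.mem_filter, Finset.mem_range] at hm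
      obtain ⟨hm1, hm2⟩ := hm
      rw [hS, Finset.mem_coe, Finset.mem_filter, Finset.mem_product, Finset.mem_range, Finset.mem_range]
      refine ⟨⟨Nat.mod_lt _ (pow_pos hb s), ?_⟩, ?_⟩
      · rw [Nat.div_lt_iff_lt_mul (pow_pos hb s), ← pow_add]
        rw [add_comm t s]
        exact hm1
      · rw [← Wk_split d s t _ _ hd (Nat.mod_lt _ (pow_pos hb s)), Nat.mod_add_div]
        exact hm2
    · intro p hp
      rw [hS, Finset.mem_coe, Finset.mem_filter, Finset.mem_product, Finset.mem_range, Finset.mem_range] at hp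
      obtain ⟨⟨hp1, hp2⟩, hp3⟩ := hp
      rw [Finset.mem_coe, Finset.mem_filter, Finset.mem_range]
      constructor
      · calc p.1 + b^s * p.2 < b^s + b^s * p.2 := by omega
          _ = b^s * (p.2 + 1) := by ring
          _ ≤ b^s * b^t := Nat.mul_le_mul_left _ (by omega)
          _ = b^(s+t) := (pow_add b s t).symm
      · rw [Wk_split d s t _ _ hd hp1]
        exact hp3
    · intro m _
      exact Nat.mod_add_div m (b^s)
    · intro p hp
      rw [hS, Finset.mem_coe, Finset.mem_filter, Finset.mem_product, Finset.mem_range, Finset.mem_range] at hp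
      obtain ⟨⟨hp1, hp2⟩, _⟩ := hp
      have e1 : (p.1 + b^s * p.2) % b^s = p.1 := by
        rw [Nat.add_mul_mod_self_left, Nat.mod_eq_of_lt hp1]
      have e2 : (p.1 + b^s * p.2) / b^s = p.2 := by
        rw [Nat.add_mul_div_left _ _ (pow_pos hb s), Nat.div_eq_of_lt hp1, zero_add]
      exact Prod.ext e1 e2
  have h2 : S.card = ∑ v ∈ I, (S.filter (fun p => Wk d s p.1 = v)).card := by
    apply Finset.card_eq_sum_card_fiberwise
    intro p hp
    rw [hS, Finset.mem_coe, Finset.mem_filter, Finset.mem_product] at hp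
    exact Finset.mem_image_of_mem _ hp.1.1
  have h3 : ∀ v, S.filter (fun p => Wk d s p.1 = v)
      = ((Finset.range (b^s)).filter (fun m => Wk d s m = v)) ×ˢ
        ((Finset.range (b^t)).filter (fun m => Wk d t m = w - v)) := by
    intro v
    ext p
    simp only [hS, Finset.mem_filter, Finset.mem_product]
    constructor
    · rintro ⟨⟨⟨hq1, hq2⟩, hsum⟩, hv⟩
      refine ⟨⟨hq1, hv⟩, hq2, ?_⟩
      rw [eq_sub_iff_add_eq, add_comm, ← hv]
      exact hsum
    · rintro ⟨⟨hq1, hv⟩, hq2, hw⟩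
      refine ⟨⟨⟨hq1, hq2⟩, ?_⟩, hv⟩
      rw [hv, hw]
      abel
  rw [h1, h2]
  refine Finset.sum_congr rfl (fun v _ => ?_)
  rw [h3 v, Finset.card_product]
  rfl

lemma cnt_neg (d t : ℕ) (hd : 0 < d) (v : Fin d → ℤ) : cnt d t (-v) = cnt d t v := by
  have hb : 0 < 2*d := by omega
  set b : ℕ := 2*d with hbdef
  set nm : ℕ → ℕ := fun m => ∑ i ∈ Finset.range t, sg d (m / b^i % b) * b^i with hnm
  have hdig : ∀ m, ∀ j, j < t → nm m / b^j % b = sg d (m / b^j % b) := by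
    intro m j hj
    exact digit_sum_extract b hb t _ (fun i _ => sg_lt (Nat.mod_lt _ hb)) j hj
  have hlt : ∀ m, nm m < b^t :=
    fun m => digit_sum_lt b hb t _ (fun i _ => sg_lt (Nat.mod_lt _ hb))
  have hWk : ∀ m, Wk d t (nm m) = - Wk d t m := by
    intro m
    rw [Wk, Wk, ← Finset.sum_neg_distrib]
    refine Finset.sum_congr rfl (fun i hi => ?_)
    rw [Finset.mem_range] at hi
    rw [hdig m i hi, stepVec_sg (Nat.mod_lt _ hb)]
  have hinv : ∀ m, m < b^t → nm (nm m) = m := by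
    intro m hm
    have : nm (nm m) = ∑ i ∈ Finset.range t, (m / b^i % b) * b^i := by
      rw [hnm]
      refine Finset.sum_congr rfl (fun i hi => ?_)
      rw [Finset.mem_range] at hi
      rw [hdig m i hi, sg_sg (Nat.mod_lt _ hb)]
    rw [this]
    exact digit_sum_recover b hb t m hm
  unfold cnt
  apply Finset.card_nbij' nm nm
  · intro m hm
    rw [Finset.mem_coe, Finset.mem_filter, Finset.mem_range] at hm ⊢
    exact ⟨hlt m, by rw [hWk m, hm.2, neg_neg]⟩
  · intro m hm
    rw [Finset.mem_coe, Finset.mem_filter, Finset.mem_range] at hm ⊢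
    exact ⟨hlt m, by rw [hWk m, hm.2]⟩
  · intro m hm
    rw [Finset.mem_coe, Finset.mem_filter, Finset.mem_range] at hm
    exact hinv m hm.1
  · intro m hm
    rw [Finset.mem_coe, Finset.mem_filter, Finset.mem_range] at hm
    exact hinv m hm.1

lemma qq_symm (d t : ℕ) (hd : 0 < d) (v : Fin d → ℤ) : qq d t (-v) = qq d t v := by
  rw [qq_eq_cnt d t hd, qq_eq_cnt d t hd, cnt_neg d t hd]

lemma qq_CK (d s t : ℕ) (hd : 0 < d) (w : Fin d → ℤ) :
    qq d (s+t) w = ∑' v : Fin d → ℤ, qq d s v * qq d t (w - v) := by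
  classical
  have hb : 0 < 2*d := by omega
  set b : ℕ := 2*d with hbdef
  rw [tsum_eq_sum (s := (Finset.range (b^s)).image (Wk d s)) (f := fun v => qq d s v * qq d t (w - v))
    (fun v hv => ?_)]
  · rw [qq_eq_cnt d (s+t) hd w, cnt_CK d s t hd w]
    push_cast
    rw [Finset.sum_mul]
    refine Finset.sum_congr rfl (fun v _ => ?_)
    rw [qq_eq_cnt d s hd, qq_eq_cnt d t hd, pow_add]
    push_cast
    ring
  · have hc : cnt d s v = 0 := by
      rw [cnt, Finset.card_eq_zero, Finset.filter_eq_empty_iff]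
      intro m hm hWm
      exact hv (hWm ▸ Finset.mem_image_of_mem _ hm)
    show qq d s v * qq d t (w - v) = 0
    rw [qq_eq_cnt d s hd, hc]
    simp

lemma qq_succ (d t : ℕ) (hd : 0 < d) (z : Fin d → ℤ) :
    ∑ j ∈ Finset.range (2*d), qq d t (z - stepVec d j) = ((2*d : ℕ) : ℝ≥0∞) * qq d (t+1) z := by
  classical
  have hb0 : ((2*d : ℕ) : ℝ≥0∞) ≠ 0 := by
    simp only [ne_eq, Nat.cast_eq_zero]
    omega
  have hbt : ((2*d : ℕ) : ℝ≥0∞) ≠ ⊤ := ENNReal.natCast_ne_top _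
  have hq1 : ∀ w : Fin d → ℤ, qq d 1 w
      = (∑ j ∈ Finset.range (2*d), if stepVec d j = w then (1:ℝ≥0∞) else 0) * ((2*d : ℕ) : ℝ≥0∞)⁻¹ := by
    intro w
    rw [qq_eq_cnt d 1 hd w, pow_one]
    congr 1
    rw [cnt, Finset.card_filter, pow_one]
    push_cast
    refine Finset.sum_congr rfl (fun m hm => ?_)
    rw [Finset.mem_range] at hm
    have hW : Wk d 1 m = stepVec d m := by
      rw [Wk, Finset.sum_range_one, pow_zero, Nat.div_one, Nat.mod_eq_of_lt hm]
    simp [hW]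
  rw [qq_CK d t 1 hd z]
  have step1 : ∀ j : ℕ, qq d t (z - stepVec d j)
      = ∑' v : Fin d → ℤ, qq d t v * (if stepVec d j = z - v then (1:ℝ≥0∞) else 0) := by
    intro j
    rw [tsum_eq_single (z - stepVec d j) (fun v hv => ?_)]
    · rw [if_pos (by abel), mul_one]
    · rw [if_neg (fun h => hv (by rw [h]; abel)), mul_zero]
  calc ∑ j ∈ Finset.range (2*d), qq d t (z - stepVec d j)
      = ∑ j ∈ Finset.range (2*d), ∑' v : Fin d → ℤ,
          qq d t v * (if stepVec d j = z - v then (1:ℝ≥0∞) else 0) :=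
        Finset.sum_congr rfl (fun j _ => step1 j)
    _ = ∑' v : Fin d → ℤ, ∑ j ∈ Finset.range (2*d),
          qq d t v * (if stepVec d j = z - v then (1:ℝ≥0∞) else 0) :=
        (Summable.tsum_finsetSum (fun j _ => ENNReal.summable)).symm
    _ = ((2*d : ℕ) : ℝ≥0∞) * ∑' v : Fin d → ℤ, qq d t v * qq d 1 (z - v) := by
        rw [← ENNReal.tsum_mul_left]
        refine tsum_congr (fun v => ?_)
        have e : ((2*d:ℕ):ℝ≥0∞) * (qq d t v * ((∑ j ∈ Finset.range (2*d),
              if stepVec d j = z - v then (1:ℝ≥0∞) else 0) * (((2*d:ℕ):ℝ≥0∞))⁻¹))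
            = (((2*d:ℕ):ℝ≥0∞) * (((2*d:ℕ):ℝ≥0∞))⁻¹) * (qq d t v * ∑ j ∈ Finset.range (2*d),
              if stepVec d j = z - v then (1:ℝ≥0∞) else 0) := by ring
        rw [hq1 (z - v), e, ENNReal.mul_inv_cancel hb0 hbt, one_mul, Finset.mul_sum]

lemma AA_eq (d s : ℕ) (hd : 0 < d) (c : Fin d → ℤ) :
    ∑' v : Fin d → ℤ, qq d s v * qq d s (v - c) = qq d (2*s) c := by
  rw [two_mul, qq_CK d s s hd c]
  refine tsum_congr (fun v => ?_)
  congr 1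
  calc qq d s (v - c) = qq d s (-(c - v)) := by rw [neg_sub]
    _ = qq d s (c - v) := qq_symm d s hd _

lemma corr_expand (d s : ℕ) (hd : 0 < d) (e z : Fin d → ℤ) :
    (∑' v : Fin d → ℤ, (qq d s v + qq d s (v - e)) * (qq d s (v - z) + qq d s (v - z - e)))
      = (qq d (2*s) z + qq d (2*s) z) + (qq d (2*s) (z + e) + qq d (2*s) (z - e)) := by
  have expand : ∀ v : Fin d → ℤ,
      (qq d s v + qq d s (v - e)) * (qq d s (v - z) + qq d s (v - z - e))
      = (qq d s v * qq d s (v - z) + qq d s (v - e) * qq d s (v - z - e))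
        + (qq d s v * qq d s (v - z - e) + qq d s (v - e) * qq d s (v - z)) := by
    intro v; ring
  rw [tsum_congr expand, ENNReal.tsum_add, ENNReal.tsum_add, ENNReal.tsum_add]
  congr 1
  · congr 1
    · exact AA_eq d s hd z
    · -- t4 : ∑ q(v-e) q(v-z-e) = qq (2s) z
      calc ∑' v : Fin d → ℤ, qq d s (v - e) * qq d s (v - z - e)
          = ∑' w : Fin d → ℤ, qq d s w * qq d s (w - z) := by
            rw [← Equiv.tsum_eq (Equiv.addRight e)
              (fun v => qq d s (v - e) * qq d s (v - z - e))]
            refine tsum_congr (fun w => ?_)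
            simp only [Equiv.coe_addRight]
            rw [show w + e - e = w by abel, show w + e - z - e = w - z by abel]
        _ = qq d (2*s) z := AA_eq d s hd z
  · congr 1
    · -- t2 : ∑ q v q(v-z-e) = qq (2s) (z+e)
      calc ∑' v : Fin d → ℤ, qq d s v * qq d s (v - z - e)
          = ∑' v : Fin d → ℤ, qq d s v * qq d s (v - (z + e)) :=
            tsum_congr (fun v => by rw [sub_sub])
        _ = qq d (2*s) (z + e) := AA_eq d s hd (z + e)
    · -- t3 : ∑ q(v-e) q(v-z) = qq (2s) (z-e)
      calc ∑' v : Fin d → ℤ, qq d s (v - e) * qq d s (v - z)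
          = ∑' w : Fin d → ℤ, qq d s w * qq d s (w - (z - e)) := by
            rw [← Equiv.tsum_eq (Equiv.addRight e)
              (fun v => qq d s (v - e) * qq d s (v - z))]
            refine tsum_congr (fun w => ?_)
            simp only [Equiv.coe_addRight]
            rw [show w + e - e = w by abel, show w + e - z = w - (z - e) by abel]
        _ = qq d (2*s) (z - e) := AA_eq d s hd (z - e)

lemma stepA (d s : ℕ) (hd : 0 < d) (z : Fin d → ℤ) :
    ∑ j ∈ Finset.range d, (∑' v : Fin d → ℤ,
        (qq d s v + qq d s (v - stepVec d j)) * (qq d s (v - z) + qq d s (v - z - stepVec d j)))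
      = ((2*d : ℕ) : ℝ≥0∞) * (qq d (2*s) z + qq d (2*s+1) z) := by
  rw [Finset.sum_congr rfl (fun j _ => corr_expand d s hd (stepVec d j) z)]
  simp only [Finset.sum_add_distrib, Finset.sum_const, Finset.card_range]
  have h2 : ∑ j ∈ Finset.range d, qq d (2*s) (z + stepVec d j)
        + ∑ j ∈ Finset.range d, qq d (2*s) (z - stepVec d j)
      = ∑ j ∈ Finset.range (2*d), qq d (2*s) (z - stepVec d j) := by
    rw [show 2*d = d + d from two_mul d, Finset.sum_range_add, add_comm]
    congr 1
    refine Finset.sum_congr rfl (fun j hj => ?_)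
    rw [Finset.mem_range] at hj
    rw [stepVec_add_d j hj, sub_neg_eq_add]
  rw [h2, qq_succ d (2*s) hd z, nsmul_eq_mul]
  push_cast
  ring

lemma stepB (d : ℕ) (f β : (Fin d → ℤ) → ℝ≥0∞) (c : Fin d → ℤ) :
    ∑' p : (Fin d → ℤ) × (Fin d → ℤ),
        f p.1 * f p.2 * (∑' v : Fin d → ℤ, β v * β (v - (p.1 - p.2 - c)))
      = ∑' u : Fin d → ℤ, (∑' x : Fin d → ℤ, f x * β (u + x))
          * (∑' x : Fin d → ℤ, f x * β (u + c + x)) := by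
  have hR : ∀ u : Fin d → ℤ, (∑' x : Fin d → ℤ, f x * β (u + x))
        * (∑' x : Fin d → ℤ, f x * β (u + c + x))
      = ∑' x : Fin d → ℤ, ∑' y : Fin d → ℤ, (f x * β (u + x)) * (f y * β (u + c + y)) := by
    intro u
    rw [← ENNReal.tsum_mul_right]
    exact tsum_congr fun x => (ENNReal.tsum_mul_left).symm
  calc ∑' p : (Fin d → ℤ) × (Fin d → ℤ),
        f p.1 * f p.2 * (∑' v : Fin d → ℤ, β v * β (v - (p.1 - p.2 - c)))
      = ∑' x : Fin d → ℤ, ∑' y : Fin d → ℤ,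
          f x * f y * (∑' v : Fin d → ℤ, β v * β (v - (x - y - c))) :=
        ENNReal.tsum_prod (f := fun x y => f x * f y * (∑' v : Fin d → ℤ, β v * β (v - (x - y - c))))
    _ = ∑' x : Fin d → ℤ, ∑' y : Fin d → ℤ, ∑' u : Fin d → ℤ,
          (f x * β (u + x)) * (f y * β (u + c + y)) := by
        refine tsum_congr fun x => tsum_congr fun y => ?_
        rw [← ENNReal.tsum_mul_left,
          ← Equiv.tsum_eq (Equiv.addRight x)
            (fun v => f x * f y * (β v * β (v - (x - y - c))))]
        refine tsum_congr fun u => ?_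
        simp only [Equiv.coe_addRight]
        rw [show u + x - (x - y - c) = u + c + y by abel]
        ring
    _ = ∑' x : Fin d → ℤ, ∑' u : Fin d → ℤ, ∑' y : Fin d → ℤ,
          (f x * β (u + x)) * (f y * β (u + c + y)) :=
        tsum_congr fun x => ENNReal.tsum_comm
    _ = ∑' u : Fin d → ℤ, ∑' x : Fin d → ℤ, ∑' y : Fin d → ℤ,
          (f x * β (u + x)) * (f y * β (u + c + y)) := ENNReal.tsum_comm
    _ = ∑' u : Fin d → ℤ, (∑' x : Fin d → ℤ, f x * β (u + x))
          * (∑' x : Fin d → ℤ, f x * β (u + c + x)) :=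
        tsum_congr fun u => (hR u).symm

lemma amgm (x y : ℝ≥0∞) : 2 * (x * y) ≤ x * x + y * y := by
  rcases eq_or_ne x ⊤ with hx | hx
  · rcases eq_or_ne y 0 with hy | hy
    · simp [hx, hy]
    · have h2 : x * x + y * y = ⊤ := by simp [hx]
      rw [h2]; exact le_top
  rcases eq_or_ne y ⊤ with hy | hy
  · rcases eq_or_ne x 0 with hx0 | hx0
    · simp [hy, hx0]
    · have h2 : x * x + y * y = ⊤ := by simp [hy]
      rw [h2]; exact le_top
  lift x to ℝ≥0 using hx
  lift y to ℝ≥0 using hy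
  have h : 2*(x*y) ≤ x*x + y*y := by
    rw [← NNReal.coe_le_coe]; push_cast; nlinarith [sq_nonneg ((x:ℝ) - (y:ℝ))]
  exact_mod_cast h

lemma CSstep {d : ℕ} (C : (Fin d → ℤ) → ℝ≥0∞) (c : Fin d → ℤ) :
    ∑' u : Fin d → ℤ, C u * C (u + c) ≤ ∑' u : Fin d → ℤ, C u * C u := by
  have h2 : 2 * ∑' u : Fin d → ℤ, C u * C (u + c) ≤ 2 * ∑' u : Fin d → ℤ, C u * C u := by
    calc 2 * ∑' u : Fin d → ℤ, C u * C (u + c)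
        = ∑' u : Fin d → ℤ, 2 * (C u * C (u + c)) := ENNReal.tsum_mul_left.symm
      _ ≤ ∑' u : Fin d → ℤ, (C u * C u + C (u + c) * C (u + c)) :=
          Summable.tsum_le_tsum (fun u => amgm _ _) ENNReal.summable ENNReal.summable
      _ = (∑' u : Fin d → ℤ, C u * C u) + ∑' u : Fin d → ℤ, C (u + c) * C (u + c) :=
          ENNReal.tsum_add
      _ = (∑' u : Fin d → ℤ, C u * C u) + ∑' u : Fin d → ℤ, C u * C u := by
          congr 1
          exact Equiv.tsum_eq (Equiv.addRight c) (fun u => C u * C u)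
      _ = 2 * ∑' u : Fin d → ℤ, C u * C u := (two_mul _).symm
  exact (ENNReal.mul_le_mul_iff_right (by norm_num) (by norm_num)).mp h2

lemma step_main (d : ℕ) (hd : 0 < d) (f : (Fin d → ℤ) → ℝ≥0∞) (s : ℕ) (a : Fin d → ℤ) :
    ∑' p : (Fin d → ℤ) × (Fin d → ℤ),
        f p.1 * f p.2 * (qq d (2*s) (p.1 - p.2 - a) + qq d (2*s+1) (p.1 - p.2 - a))
      ≤ ∑' p : (Fin d → ℤ) × (Fin d → ℤ),
          f p.1 * f p.2 * (qq d (2*s) (p.1 - p.2) + qq d (2*s+1) (p.1 - p.2)) := by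
  have hb0 : ((2*d : ℕ) : ℝ≥0∞) ≠ 0 := by
    simp only [ne_eq, Nat.cast_eq_zero]; omega
  have hbt : ((2*d : ℕ) : ℝ≥0∞) ≠ ⊤ := ENNReal.natCast_ne_top _
  set β : ℕ → (Fin d → ℤ) → ℝ≥0∞ := fun j v => qq d s v + qq d s (v - stepVec d j) with hβ
  set C : ℕ → (Fin d → ℤ) → ℝ≥0∞ := fun j u => ∑' x : Fin d → ℤ, f x * β j (u + x) with hC
  have key : ∀ c : Fin d → ℤ,
      ((2*d : ℕ) : ℝ≥0∞) * ∑' p : (Fin d → ℤ) × (Fin d → ℤ),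
          f p.1 * f p.2 * (qq d (2*s) (p.1 - p.2 - c) + qq d (2*s+1) (p.1 - p.2 - c))
      = ∑ j ∈ Finset.range d, ∑' u : Fin d → ℤ, C j u * C j (u + c) := by
    intro c
    calc ((2*d : ℕ) : ℝ≥0∞) * ∑' p : (Fin d → ℤ) × (Fin d → ℤ),
          f p.1 * f p.2 * (qq d (2*s) (p.1 - p.2 - c) + qq d (2*s+1) (p.1 - p.2 - c))
        = ∑' p : (Fin d → ℤ) × (Fin d → ℤ), ((2*d : ℕ) : ℝ≥0∞)
            * (f p.1 * f p.2 * (qq d (2*s) (p.1 - p.2 - c) + qq d (2*s+1) (p.1 - p.2 - c))) :=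
          ENNReal.tsum_mul_left.symm
      _ = ∑' p : (Fin d → ℤ) × (Fin d → ℤ), f p.1 * f p.2
            * (((2*d : ℕ) : ℝ≥0∞) * (qq d (2*s) (p.1 - p.2 - c) + qq d (2*s+1) (p.1 - p.2 - c))) :=
          tsum_congr fun p => by ring
      _ = ∑' p : (Fin d → ℤ) × (Fin d → ℤ), f p.1 * f p.2
            * (∑ j ∈ Finset.range d, ∑' v : Fin d → ℤ,
                β j v * β j (v - (p.1 - p.2 - c))) :=
          tsum_congr fun p => by rw [← stepA d s hd (p.1 - p.2 - c)]
      _ = ∑' p : (Fin d → ℤ) × (Fin d → ℤ), ∑ j ∈ Finset.range d, f p.1 * f p.2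
            * (∑' v : Fin d → ℤ, β j v * β j (v - (p.1 - p.2 - c))) :=
          tsum_congr fun p => Finset.mul_sum _ _ _
      _ = ∑ j ∈ Finset.range d, ∑' p : (Fin d → ℤ) × (Fin d → ℤ), f p.1 * f p.2
            * (∑' v : Fin d → ℤ, β j v * β j (v - (p.1 - p.2 - c))) :=
          Summable.tsum_finsetSum fun j _ => ENNReal.summable
      _ = ∑ j ∈ Finset.range d, ∑' u : Fin d → ℤ, C j u * C j (u + c) :=
          Finset.sum_congr rfl fun j _ => stepB d f (β j) c
  rw [← ENNReal.mul_le_mul_iff_right hb0 hbt]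
  have hz : ∑' p : (Fin d → ℤ) × (Fin d → ℤ),
        f p.1 * f p.2 * (qq d (2*s) (p.1 - p.2) + qq d (2*s+1) (p.1 - p.2))
      = ∑' p : (Fin d → ℤ) × (Fin d → ℤ),
          f p.1 * f p.2 * (qq d (2*s) (p.1 - p.2 - 0) + qq d (2*s+1) (p.1 - p.2 - 0)) :=
    tsum_congr fun p => by rw [sub_zero]
  rw [hz, key a, key 0]
  refine Finset.sum_le_sum fun j _ => ?_
  calc ∑' u : Fin d → ℤ, C j u * C j (u + a) ≤ ∑' u : Fin d → ℤ, C j u * C j u := CSstep _ _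
    _ = ∑' u : Fin d → ℤ, C j u * C j (u + 0) := tsum_congr fun u => by rw [add_zero]

end GreenAux

/-- **Rearrangement inequality for Green kernels** (Lemma 3.1, first part): for `d ≥ 5`,
all `a ∈ ℤ^d` and `n ≥ 1`,
`∑_{x,y} G_n(0,x) G_n(0,y) G(0, x−y−a) ≤ ∑_{x,y} G_n(0,x) G_n(0,y) G(0, x−y)`. -/
theorem green_rearrangement (d : ℕ) (hd : 5 ≤ d) (a : Fin d → ℤ) (n : ℕ) (hn : 1 ≤ n) :
    ∑' p : (Fin d → ℤ) × (Fin d → ℤ),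
        greenNE d n 0 p.1 * greenNE d n 0 p.2 * greenE d 0 (p.1 - p.2 - a)
      ≤ ∑' p : (Fin d → ℤ) × (Fin d → ℤ),
          greenNE d n 0 p.1 * greenNE d n 0 p.2 * greenE d 0 (p.1 - p.2) := by
  have hd0 : 0 < d := by omega
  have hrep : ∀ c : Fin d → ℤ,
      (∑' p : (Fin d → ℤ) × (Fin d → ℤ),
          greenNE d n 0 p.1 * greenNE d n 0 p.2 * greenE d 0 (p.1 - p.2 - c))
      = ∑' k : ℕ, ∑' p : (Fin d → ℤ) × (Fin d → ℤ),
          greenNE d n 0 p.1 * greenNE d n 0 p.2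
            * (GreenAux.qq d (2*k) (p.1 - p.2 - c) + GreenAux.qq d (2*k+1) (p.1 - p.2 - c)) := by
    intro c
    calc ∑' p : (Fin d → ℤ) × (Fin d → ℤ),
          greenNE d n 0 p.1 * greenNE d n 0 p.2 * greenE d 0 (p.1 - p.2 - c)
        = ∑' p : (Fin d → ℤ) × (Fin d → ℤ), ∑' t : ℕ,
            greenNE d n 0 p.1 * greenNE d n 0 p.2 * GreenAux.qq d t (p.1 - p.2 - c) :=
          tsum_congr fun p => (ENNReal.tsum_mul_left).symm
      _ = ∑' t : ℕ, ∑' p : (Fin d → ℤ) × (Fin d → ℤ),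
            greenNE d n 0 p.1 * greenNE d n 0 p.2 * GreenAux.qq d t (p.1 - p.2 - c) :=
          ENNReal.tsum_comm
      _ = ∑' k : ℕ, ∑' p : (Fin d → ℤ) × (Fin d → ℤ),
            greenNE d n 0 p.1 * greenNE d n 0 p.2
              * (GreenAux.qq d (2*k) (p.1 - p.2 - c) + GreenAux.qq d (2*k+1) (p.1 - p.2 - c)) := by
          rw [← tsum_even_add_odd ENNReal.summable ENNReal.summable, ← ENNReal.tsum_add]
          exact tsum_congr fun k => by
            rw [← ENNReal.tsum_add]
            exact tsum_congr fun p => (mul_add _ _ _).symm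
  rw [hrep a]
  have hz : (∑' p : (Fin d → ℤ) × (Fin d → ℤ),
        greenNE d n 0 p.1 * greenNE d n 0 p.2 * greenE d 0 (p.1 - p.2))
      = ∑' p : (Fin d → ℤ) × (Fin d → ℤ),
          greenNE d n 0 p.1 * greenNE d n 0 p.2 * greenE d 0 (p.1 - p.2 - 0) :=
    tsum_congr fun p => by rw [sub_zero]
  rw [hz, hrep 0]
  refine Summable.tsum_le_tsum (fun k => ?_) ENNReal.summable ENNReal.summable
  refine (GreenAux.step_main d hd0 (greenNE d n 0) k a).trans (le_of_eq ?_)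
  exact (tsum_congr fun p => by rw [sub_zero]).symm
end
end

section
/- Let (a_n), (b_n), (c_n) be sequences of real numbers such that a_n + a_m − c_{n+m} ≤ a_{n+m} ≤ a_n + a_m + b_{n+m} for all n, m ≥ 1. If (b_n) and (c_n) are nonnegative, non-decreasing, and satisfy ∑_{n=1}^∞ (b_n + c_n)/(n(n+1)) < ∞, then the limit lim_{n→∞} a_n/n exists. -/
open Filter Topology

open Finset

set_option maxHeartbeats 1000000 in
private lemma hamA (h g φ : ℕ → ℝ)
    (hsub : ∀ x, 1 ≤ x → ∀ y, 1 ≤ y → h (x + y) ≤ h x + h y + g (x + y))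
    (hg0 : ∀ x, 1 ≤ x → 0 ≤ g x)
    (hgmono : ∀ x y, 1 ≤ x → x ≤ y → g x ≤ g y)
    (hφ1 : ∀ A B : ℕ, 1 ≤ A → A ≤ B →
      ((B : ℝ) - (A : ℝ)) * g A ≤ (A : ℝ) * (B : ℝ) * (φ A - φ B))
    (n : ℕ) (hn : 1 ≤ n) :
    ∀ q : ℕ, 1 ≤ q → ∀ r : ℕ, r ≤ q →
      h (q * n + r) ≤ ((q : ℝ) - (r : ℝ)) * h n + (r : ℝ) * h (n + 1)
        + 8 * ((q * n + r : ℕ) : ℝ) * (φ n - φ (2 * (q * n + r))) := by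
  have hφanti : ∀ A B : ℕ, 1 ≤ A → A ≤ B → φ B ≤ φ A := by
    intro A B hA hAB
    have h1 := hφ1 A B hA hAB
    have hA' : (1:ℝ) ≤ (A:ℝ) := by exact_mod_cast hA
    have hB' : (A:ℝ) ≤ (B:ℝ) := by exact_mod_cast hAB
    have hge : (0:ℝ) ≤ ((B:ℝ) - A) * g A := mul_nonneg (by linarith) (hg0 A hA)
    have hABpos : (0:ℝ) < (A:ℝ) * B := mul_pos (by linarith) (by linarith)
    by_contra hlt
    push_neg at hlt
    have : (A:ℝ) * B * (φ A - φ B) < 0 := mul_neg_of_pos_of_neg hABpos (by linarith)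
    linarith
  intro q
  induction q using Nat.strong_induction_on with
  | _ q IH =>
    intro hq r hr
    by_cases hq2 : q < 2
    · -- q = 1
      have hq1 : q = 1 := by omega
      subst hq1
      interval_cases r
      · have hanti := hφanti n (2 * n) hn (by omega)
        have hcast : (0:ℝ) ≤ (n:ℝ) := by positivity
        have hprod := mul_nonneg hcast (sub_nonneg.2 hanti)
        simp only [one_mul, add_zero]
        push_cast
        nlinarith [hprod]
      · have hanti := hφanti n (2 * (n + 1)) hn (by omega)
        have hcast : (0:ℝ) ≤ ((n:ℝ) + 1) := by positivity
        have hprod := mul_nonneg hcast (sub_nonneg.2 hanti)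
        simp only [one_mul]
        push_cast
        nlinarith [hprod]
    · push_neg at hq2
      have hq₁def : ∃ q₁, q₁ = (q + 1) / 2 := ⟨_, rfl⟩
      obtain ⟨q₁, hq₁def⟩ := hq₁def
      obtain ⟨q₂, hq₂def⟩ : ∃ q₂, q₂ = q - q₁ := ⟨_, rfl⟩
      obtain ⟨r₁, hr₁def⟩ : ∃ r₁, r₁ = (r + 1) / 2 := ⟨_, rfl⟩
      obtain ⟨r₂, hr₂def⟩ : ∃ r₂, r₂ = r - r₁ := ⟨_, rfl⟩
      have hqq : q₁ + q₂ = q := by omega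
      have hrr : r₁ + r₂ = r := by omega
      have hq₁1 : 1 ≤ q₁ := by omega
      have hq₂1 : 1 ≤ q₂ := by omega
      have hq₁lt : q₁ < q := by omega
      have hq₂lt : q₂ < q := by omega
      have hr₁q : r₁ ≤ q₁ := by omega
      have hr₂q : r₂ ≤ q₂ := by omega
      have hq₂₁ : q₂ ≤ q₁ := by omega
      have hr₂₁ : r₂ ≤ r₁ := by omega
      have IHs := IH q₁ hq₁lt hq₁1 r₁ hr₁q
      have IHt := IH q₂ hq₂lt hq₂1 r₂ hr₂q
      have hmuls : q₂ * n ≤ q₁ * n := Nat.mul_le_mul_right n hq₂₁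
      have hq₁n : 1 * 1 ≤ q₁ * n := Nat.mul_le_mul hq₁1 hn
      have hq₂n : 1 * 1 ≤ q₂ * n := Nat.mul_le_mul hq₂1 hn
      have hqn1 : q * 1 ≤ q * n := Nat.mul_le_mul_left q hn
      have hqn4 : q * n ≤ (4 * q₂) * n := Nat.mul_le_mul_right n (by omega)
      have hqn4' : (4 * q₂) * n = 4 * (q₂ * n) := by ring
      have hsum_eq : (q₁ * n + r₁) + (q₂ * n + r₂) = q * n + r := by
        have h1 : (q₁ + q₂) * n = q₁ * n + q₂ * n := by ring
        have h2 : (q₁ + q₂) * n = q * n := by rw [hqq]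
        omega
      set s := q₁ * n + r₁ with hsdef
      set t := q₂ * n + r₂ with htdef
      set m := q * n + r with hmdef
      have hs1 : 1 ≤ s := by omega
      have ht1 : 1 ≤ t := by omega
      have hts : t ≤ s := by omega
      have hm1 : 1 ≤ m := by omega
      have hmle2s : m ≤ 2 * s := by omega
      have h2tle : 2 * t ≤ m := by omega
      have h8t : m ≤ 8 * t := by omega
      have hsub' : h m ≤ h s + h t + g m := by
        have := hsub s hs1 t ht1
        rwa [hsum_eq] at this
      have hmst : m = s + t := by omega
      have hMst : (m:ℝ) = (s:ℝ) + (t:ℝ) := by exact_mod_cast hmst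
      have hMpos : (0:ℝ) < (m:ℝ) := by exact_mod_cast hm1
      -- key inequality
      have hkey : g m ≤ 8 * (s:ℝ) * (φ (2*s) - φ (2*m)) + 8 * (t:ℝ) * (φ (2*t) - φ (2*m)) := by
        have hA := hφ1 (2*s) (2*m) (by omega) (by omega)
        have hB := hφ1 m (2*m) hm1 (by omega)
        have hC := hφanti (2*t) m (by omega) h2tle
        have hgm2s : g m ≤ g (2*s) := hgmono m (2*s) hm1 hmle2s
        have hgm0 : 0 ≤ g m := hg0 m hm1
        push_cast at hA hB
        have h2T0 : (0:ℝ) ≤ 2*(t:ℝ) := by positivity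
        have e1a : 2*(t:ℝ)*(g m) ≤ 2*(t:ℝ)*(g (2*s)) :=
          mul_le_mul_of_nonneg_left hgm2s h2T0
        have e1b : 2*(t:ℝ)*(g (2*s)) = (2*(m:ℝ) - 2*(s:ℝ))*(g (2*s)) := by
          rw [hMst]; ring
        have e1 : 2*(t:ℝ)*(g m) ≤ 2*(s:ℝ)*(2*(m:ℝ))*(φ (2*s) - φ (2*m)) := by
          linarith [e1a, hA]
        have e2a : 2*(m:ℝ)*(m:ℝ)*(φ m) ≤ 2*(m:ℝ)*(m:ℝ)*(φ (2*t)) :=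
          mul_le_mul_of_nonneg_left hC (by positivity)
        have e2 : (m:ℝ)*(g m) ≤ (m:ℝ)*(2*(m:ℝ)*(φ (2*t) - φ (2*m))) := by
          nlinarith [hB, e2a]
        have e2' : g m ≤ 2*(m:ℝ)*(φ (2*t) - φ (2*m)) :=
          le_of_mul_le_mul_left e2 hMpos
        have e3 : (m:ℝ)*(g m) ≤ 8*(t:ℝ)*(g m) := by
          have hm8 : (m:ℝ) ≤ 8*(t:ℝ) := by exact_mod_cast h8t
          exact mul_le_mul_of_nonneg_right hm8 hgm0
        have e4 : 4*(t:ℝ)*(g m) ≤ 4*(t:ℝ)*(2*(m:ℝ)*(φ (2*t) - φ (2*m))) :=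
          mul_le_mul_of_nonneg_left e2' (by positivity)
        have e5 : (m:ℝ)*(g m) ≤
            (m:ℝ)*(8*(s:ℝ)*(φ (2*s) - φ (2*m)) + 8*(t:ℝ)*(φ (2*t) - φ (2*m))) := by
          linarith [e1, e3, e4]
        exact le_of_mul_le_mul_left e5 hMpos
      have hbr : 8*(m:ℝ)*(φ n - φ (2*m))
          = 8*(s:ℝ)*(φ n - φ (2*m)) + 8*(t:ℝ)*(φ n - φ (2*m)) := by
        rw [hMst]; ring
      have hQc : (q:ℝ) = (q₁:ℝ) + (q₂:ℝ) := by exact_mod_cast hqq.symm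
      have hRc : (r:ℝ) = (r₁:ℝ) + (r₂:ℝ) := by exact_mod_cast hrr.symm
      have hQRh : ((q:ℝ) - (r:ℝ))*h n
          = ((q₁:ℝ) - (r₁:ℝ))*h n + ((q₂:ℝ) - (r₂:ℝ))*h n := by
        rw [hQc, hRc]; ring
      have hrh : (r:ℝ)*h (n+1) = (r₁:ℝ)*h (n+1) + (r₂:ℝ)*h (n+1) := by
        rw [hRc]; ring
      linarith [IHs, IHt, hsub', hkey, hbr, hQRh, hrh]

set_option maxHeartbeats 1000000 in
private lemma hamB (h g φ : ℕ → ℝ)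
    (hsub : ∀ x, 1 ≤ x → ∀ y, 1 ≤ y → h (x + y) ≤ h x + h y + g (x + y))
    (hg0 : ∀ x, 1 ≤ x → 0 ≤ g x)
    (hgmono : ∀ x y, 1 ≤ x → x ≤ y → g x ≤ g y)
    (hφ1 : ∀ A B : ℕ, 1 ≤ A → A ≤ B →
      ((B : ℝ) - (A : ℝ)) * g A ≤ (A : ℝ) * (B : ℝ) * (φ A - φ B))
    (hφ0 : ∀ x, 1 ≤ x → 0 ≤ φ x)
    (n : ℕ) (hn : 1 ≤ n) (ε : ℝ) (hε : 0 < ε) :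
    ∀ᶠ m in atTop, h m / m ≤ h n / n + 8 * φ n + ε := by
  have hN : (0:ℝ) < (n:ℝ) := by exact_mod_cast hn
  obtain ⟨D, hDdef⟩ : ∃ D : ℝ, D = 2*(n:ℝ)*|h n| + (n:ℝ)*|h (n+1)| := ⟨_, rfl⟩
  have hD0 : 0 ≤ D := by rw [hDdef]; positivity
  rw [eventually_atTop]
  refine ⟨max (n*n) (⌈D/ε⌉₊ + 1), fun m hm => ?_⟩
  have hm1 : n*n ≤ m := le_trans (le_max_left _ _) hm
  have hm2 : ⌈D/ε⌉₊ + 1 ≤ m := le_trans (le_max_right _ _) hm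
  have hn2 : 1 ≤ n*n := Nat.mul_le_mul hn hn
  have hmpos : 0 < m := by omega
  obtain ⟨q, hqdef⟩ : ∃ q, q = m / n := ⟨_, rfl⟩
  obtain ⟨r, hrdef⟩ : ∃ r, r = m % n := ⟨_, rfl⟩
  have hmqr : q * n + r = m := by
    rw [hqdef, hrdef, Nat.mul_comm]; exact Nat.div_add_mod m n
  have hrn : r < n := by rw [hrdef]; exact Nat.mod_lt m (by omega)
  have hnq : n ≤ q := by
    rw [hqdef]; exact (Nat.le_div_iff_mul_le (by omega)).mpr hm1
  have hq1 : 1 ≤ q := le_trans hn hnq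
  have hrq : r ≤ q := by omega
  have key := hamA h g φ hsub hg0 hgmono hφ1 n hn q hq1 r hrq
  rw [hmqr] at key
  have hφ2m : 0 ≤ φ (2*m) := hφ0 _ (by omega)
  have hM : (0:ℝ) < (m:ℝ) := by exact_mod_cast hmpos
  have hcast : (q:ℝ)*(n:ℝ) + (r:ℝ) = (m:ℝ) := by exact_mod_cast hmqr
  have hrR : (r:ℝ) ≤ (n:ℝ) := by exact_mod_cast hrn.le
  have hrR0 : (0:ℝ) ≤ (r:ℝ) := by positivity
  have hN1 : (1:ℝ) ≤ (n:ℝ) := by exact_mod_cast hn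
  -- bound the two h-terms
  have hQc : (q:ℝ) - r - (m:ℝ)/(n:ℝ) = -((r:ℝ)*(1+(n:ℝ))/(n:ℝ)) := by
    field_simp
    linarith [hcast]
  have habs : |(q:ℝ) - r - (m:ℝ)/(n:ℝ)| ≤ 2*(n:ℝ) := by
    rw [hQc, abs_neg, abs_of_nonneg (by positivity)]
    rw [div_le_iff₀ hN]
    nlinarith [hrR, hN1]
  have t1 : ((q:ℝ) - r)*h n ≤ (m:ℝ)/(n:ℝ)*h n + 2*(n:ℝ)*|h n| := by
    have h1 : ((q:ℝ) - r - (m:ℝ)/(n:ℝ))*h n ≤ |(q:ℝ) - r - (m:ℝ)/(n:ℝ)| * |h n| := by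
      calc ((q:ℝ) - r - (m:ℝ)/(n:ℝ))*h n ≤ |((q:ℝ) - r - (m:ℝ)/(n:ℝ))*h n| := le_abs_self _
      _ = |(q:ℝ) - r - (m:ℝ)/(n:ℝ)| * |h n| := abs_mul _ _
    have h2 : |(q:ℝ) - r - (m:ℝ)/(n:ℝ)| * |h n| ≤ 2*(n:ℝ)*|h n| :=
      mul_le_mul_of_nonneg_right habs (abs_nonneg _)
    linarith [h1, h2]
  have t2 : (r:ℝ)*h (n+1) ≤ (n:ℝ)*|h (n+1)| := by
    calc (r:ℝ)*h (n+1) ≤ (r:ℝ)*|h (n+1)| :=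
      mul_le_mul_of_nonneg_left (le_abs_self _) hrR0
    _ ≤ (n:ℝ)*|h (n+1)| := mul_le_mul_of_nonneg_right hrR (abs_nonneg _)
  have t3 : 8*(m:ℝ)*(φ n - φ (2*m)) ≤ 8*(m:ℝ)*(φ n) := by
    have : (0:ℝ) ≤ 8*(m:ℝ)*(φ (2*m)) := by positivity
    linarith
  have final1 : h m ≤ (m:ℝ)/(n:ℝ)*h n + D + 8*(m:ℝ)*(φ n) := by
    rw [hDdef]; linarith [key, t1, t2, t3]
  have final2 : h m / m ≤ h n/(n:ℝ) + 8*φ n + D/(m:ℝ) := by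
    rw [div_le_iff₀ hM]
    have hexp : (h n/(n:ℝ) + 8*φ n + D/(m:ℝ))*(m:ℝ)
        = (m:ℝ)/(n:ℝ)*h n + D + 8*(m:ℝ)*(φ n) := by
      field_simp
      ring
    rw [hexp]
    exact final1
  have hDm : D/(m:ℝ) ≤ ε := by
    have h1 : D/ε ≤ (⌈D/ε⌉₊ : ℝ) := Nat.le_ceil _
    have h2 : ((⌈D/ε⌉₊ : ℕ):ℝ) + 1 ≤ (m:ℝ) := by exact_mod_cast hm2
    have h3 : D/ε ≤ (m:ℝ) := by linarith
    have h4 : D ≤ (m:ℝ)*ε := (div_le_iff₀ hε).mp h3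
    rw [div_le_iff₀ hM]
    linarith
  linarith [final2, hDm]


set_option maxHeartbeats 1000000 in
/-- **Hammersley's lemma** (generalized subadditivity): if sequences `(a_n), (b_n), (c_n)`
satisfy `a_n + a_m − c_{n+m} ≤ a_{n+m} ≤ a_n + a_m + b_{n+m}` for all `n, m ≥ 1`, with
`(b_n)` and `(c_n)` nonnegative and non-decreasing and
`∑_{n ≥ 1} (b_n + c_n)/(n(n+1)) < ∞`, then `lim_{n → ∞} a_n / n` exists. -/
theorem hammersley (a b c : ℕ → ℝ)
    (hsand : ∀ n, 1 ≤ n → ∀ m, 1 ≤ m →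
      a n + a m - c (n + m) ≤ a (n + m) ∧ a (n + m) ≤ a n + a m + b (n + m))
    (hb0 : ∀ n, 1 ≤ n → 0 ≤ b n) (hc0 : ∀ n, 1 ≤ n → 0 ≤ c n)
    (hbmono : ∀ n m, 1 ≤ n → n ≤ m → b n ≤ b m)
    (hcmono : ∀ n m, 1 ≤ n → n ≤ m → c n ≤ c m)
    (hsum : Summable (fun n : ℕ => (b (n + 1) + c (n + 1)) / ((n + 1) * (n + 2)))) :
    ∃ L : ℝ, Tendsto (fun n : ℕ => a n / n) atTop (𝓝 L) := by
  obtain ⟨g, hgdef⟩ : ∃ g : ℕ → ℝ, g = fun r => b r + c r := ⟨_, rfl⟩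
  obtain ⟨G, hGdef⟩ : ∃ G : ℕ → ℝ, G = fun r => g r / ((r:ℝ) * ((r:ℝ) + 1)) := ⟨_, rfl⟩
  have hG : Summable G := by
    rw [← summable_nat_add_iff 1]
    refine hsum.congr fun k => ?_
    rw [hGdef, hgdef]
    push_cast
    ring
  obtain ⟨φ, hφdef⟩ : ∃ φ : ℕ → ℝ, φ = fun x : ℕ => ∑' i : ℕ, G (x + i) := ⟨_, rfl⟩
  have hg0 : ∀ x, 1 ≤ x → 0 ≤ g x := by
    intro x hx; rw [hgdef]; exact add_nonneg (hb0 x hx) (hc0 x hx)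
  have hgmono : ∀ x y, 1 ≤ x → x ≤ y → g x ≤ g y := by
    intro x y hx hxy; rw [hgdef]
    exact add_le_add (hbmono x y hx hxy) (hcmono x y hx hxy)
  have hG0 : ∀ x : ℕ, 1 ≤ x → 0 ≤ G x := by
    intro x hx; rw [hGdef]
    exact div_nonneg (hg0 x hx) (by positivity)
  have hφ0 : ∀ x, 1 ≤ x → 0 ≤ φ x := by
    intro x hx; rw [hφdef]
    exact tsum_nonneg fun i => hG0 _ (by omega)
  have hsummand : ∀ A : ℕ, Summable (fun i => G (A + i)) := by
    intro A
    have h1 : Summable (fun i => G (i + A)) := (summable_nat_add_iff A).2 hG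
    exact h1.congr fun i => by rw [add_comm]
  have hφdiff : ∀ A B : ℕ, A ≤ B →
      φ A - φ B = ∑ i ∈ range (B - A), G (A + i) := by
    intro A B hAB
    have h1 : ∑ i ∈ range (B - A), G (A + i) + ∑' i : ℕ, G (A + (i + (B - A)))
        = ∑' i : ℕ, G (A + i) := by
      simpa using Summable.sum_add_tsum_nat_add (f := fun i => G (A + i)) (B - A) (hsummand A)
    have h2 : ∑' i : ℕ, G (A + (i + (B - A))) = φ B := by
      rw [hφdef]
      exact tsum_congr fun i => by congr 1; omega
    have hφA : φ A = ∑' i : ℕ, G (A + i) := by rw [hφdef]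
    rw [hφA, ← h2, ← h1]
    ring
  have hφ1 : ∀ A B : ℕ, 1 ≤ A → A ≤ B →
      ((B:ℝ) - (A:ℝ)) * g A ≤ (A:ℝ) * (B:ℝ) * (φ A - φ B) := by
    intro A B hA hAB
    rw [hφdiff A B hAB]
    have hA0 : (0:ℝ) < A := by exact_mod_cast hA
    have hB0 : (0:ℝ) < B := by
      have : 1 ≤ B := le_trans hA hAB
      exact_mod_cast this
    have step : ∀ i ∈ range (B - A),
        g A * (1/((A:ℝ)+i) - 1/((A:ℝ)+i+1)) ≤ G (A + i) := by
      intro i _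
      have hx : (0:ℝ) < (A:ℝ) + i := by positivity
      have hgAx : g A ≤ g (A + i) := hgmono A (A+i) hA (by omega)
      have hGx : G (A + i) = g (A+i) / (((A:ℝ)+i) * ((A:ℝ)+i+1)) := by
        rw [hGdef]; push_cast; ring_nf
      have hfrac : (1/((A:ℝ)+i) - 1/((A:ℝ)+i+1)) = 1/(((A:ℝ)+i)*((A:ℝ)+i+1)) := by
        field_simp
        ring
      rw [hGx, hfrac, mul_one_div]
      exact div_le_div_of_nonneg_right hgAx (by positivity) |>.trans_eq rfl
    have sum_ge := Finset.sum_le_sum step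
    have tel : ∑ i ∈ range (B - A), g A * (1/((A:ℝ)+i) - 1/((A:ℝ)+i+1))
        = g A * (1/(A:ℝ) - 1/(B:ℝ)) := by
      rw [← Finset.mul_sum]
      congr 1
      have h3 := Finset.sum_range_sub' (f := fun i : ℕ => 1/((A:ℝ)+i)) (B - A)
      calc ∑ i ∈ range (B - A), (1/((A:ℝ)+i) - 1/((A:ℝ)+i+1))
          = ∑ i ∈ range (B - A), (1/((A:ℝ)+i) - 1/((A:ℝ)+(i+1:ℕ))) := by
            refine Finset.sum_congr rfl fun i _ => ?_
            push_cast
            ring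
        _ = 1/((A:ℝ)+(0:ℕ)) - 1/((A:ℝ)+((B-A:ℕ):ℝ)) := h3
        _ = 1/(A:ℝ) - 1/(B:ℝ) := by
            rw [Nat.cast_sub hAB]
            norm_num
    have hge : g A * (1/(A:ℝ) - 1/(B:ℝ)) ≤ ∑ i ∈ range (B - A), G (A + i) := by
      rw [← tel]; exact sum_ge
    have hfinal : ((B:ℝ) - A)*g A = (A:ℝ)*B*(g A*(1/(A:ℝ) - 1/(B:ℝ))) := by
      field_simp
    rw [hfinal]
    exact mul_le_mul_of_nonneg_left hge (by positivity)
  have hφlim : Tendsto φ atTop (𝓝 0) := by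
    have h1 := tendsto_sum_nat_add G
    refine h1.congr fun i => ?_
    rw [hφdef]
    exact tsum_congr fun k => by rw [add_comm]
  have hsubU : ∀ x, 1 ≤ x → ∀ y, 1 ≤ y → a (x+y) ≤ a x + a y + g (x+y) := by
    intro x hx y hy
    have h1 := (hsand x hx y hy).2
    have hc' := hc0 (x+y) (by omega)
    rw [hgdef]; simp only []; linarith
  have hsubL : ∀ x, 1 ≤ x → ∀ y, 1 ≤ y →
      (fun z => -a z) (x+y) ≤ (fun z => -a z) x + (fun z => -a z) y + g (x+y) := by
    intro x hx y hy
    have h1 := (hsand x hx y hy).1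
    have hb' := hb0 (x+y) (by omega)
    rw [hgdef]; simp only []; linarith
  have hcauchy : CauchySeq (fun m : ℕ => a m / m) := by
    rw [Metric.cauchySeq_iff]
    intro ε hε
    have hε40 : 0 < ε/40 := by linarith
    obtain ⟨n0, hn0⟩ := (Metric.tendsto_atTop.mp hφlim) (ε/40) hε40
    obtain ⟨n, hn1, hnφ⟩ : ∃ n : ℕ, 1 ≤ n ∧ φ n < ε/40 := by
      refine ⟨max n0 1, le_max_right _ _, ?_⟩
      have := hn0 (max n0 1) (le_max_left _ _)
      rw [Real.dist_eq, sub_zero] at this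
      calc φ (max n0 1) ≤ |φ (max n0 1)| := le_abs_self _
        _ < ε/40 := this
    have HU := hamB a g φ hsubU hg0 hgmono hφ1 hφ0 n hn1 (ε/40) hε40
    have HL := hamB (fun z => -a z) g φ hsubL hg0 hgmono hφ1 hφ0 n hn1 (ε/40) hε40
    obtain ⟨N1, h1⟩ := eventually_atTop.mp HU
    obtain ⟨N2, h2⟩ := eventually_atTop.mp HL
    refine ⟨max N1 N2, fun p hp k hk => ?_⟩
    have hp1 := h1 p (le_trans (le_max_left _ _) hp)
    have hp2 := h2 p (le_trans (le_max_right _ _) hp)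
    have hk1 := h1 k (le_trans (le_max_left _ _) hk)
    have hk2 := h2 k (le_trans (le_max_right _ _) hk)
    simp only [neg_div] at hp2 hk2
    rw [Real.dist_eq, abs_sub_lt_iff]
    have hφn0 : 0 ≤ φ n := hφ0 n hn1
    constructor <;> linarith
  exact cauchySeq_tendsto_of_complete hcauchy
end
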